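/- Let k be an integer with k > 1 and π a permutation of {1,...,k}. There exists a constant C = C(π) such that for all integers m, n ≥ 0, the number of n×n 0-1 matrices containing at most m copies of the permutation matrix A_π is at most exp(C·(n + (m·n^(2k-2))^(1/(2k-1)))). -/

import Mathlib

/-- The number of copies of the `k × k` permutation matrix `A_π` in the `n × n`
0-1 matrix `M`: pairs of strictly increasing row/column index tuples such that
`M` has a one at `(x i, y (π i))` for every `i`. -/
noncomputable def matCopies {k n : ℕ} (π : Equiv.Perm (Fin k))
    (M : Fin n → Fin n → Bool) : ℕ :=
  Nat.card {xy : (Fin k → Fin n) × (Fin k → Fin n) //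
    StrictMono xy.1 ∧ StrictMono xy.2 ∧ ∀ i, M (xy.1 i) (xy.2 (π i)) = true}

open Finset

namespace FewCopies

variable {k : ℕ}

/-- The finset of copies of `π` in `M`. -/
noncomputable def cpy {n : ℕ} (π : Equiv.Perm (Fin k)) (M : Fin n → Fin n → Bool) :
    Finset ((Fin k → Fin n) × (Fin k → Fin n)) := by
  classical exact
  univ.filter fun xy => StrictMono xy.1 ∧ StrictMono xy.2 ∧ ∀ i, M (xy.1 i) (xy.2 (π i)) = true

lemma mem_cpy {n : ℕ} {π : Equiv.Perm (Fin k)} {M : Fin n → Fin n → Bool}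
    {xy : (Fin k → Fin n) × (Fin k → Fin n)} :
    xy ∈ cpy π M ↔ StrictMono xy.1 ∧ StrictMono xy.2 ∧ ∀ i, M (xy.1 i) (xy.2 (π i)) = true := by
  simp [cpy]

/-- number of one entries -/
noncomputable def ones {n : ℕ} (M : Fin n → Fin n → Bool) : ℕ := by
  classical exact (univ.filter fun p : Fin n × Fin n => M p.1 p.2 = true).card

lemma matCopies_eq {n : ℕ} (π : Equiv.Perm (Fin k)) (M : Fin n → Fin n → Bool) :
    matCopies π M = (cpy π M).card := by
  classical
  rw [matCopies, Nat.card_eq_fintype_card, cpy]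
  rw [Fintype.card_subtype]

lemma cpy_subset_of_le {n : ℕ} (π : Equiv.Perm (Fin k)) {M M' : Fin n → Fin n → Bool}
    (h : ∀ x y, M x y = true → M' x y = true) : cpy π M ⊆ cpy π M' := by
  intro xy hxy
  rw [mem_cpy] at *
  exact ⟨hxy.1, hxy.2.1, fun i => h _ _ (hxy.2.2 i)⟩

lemma ones_le_sq {n : ℕ} (M : Fin n → Fin n → Bool) : ones M ≤ n * n := by
  classical
  calc ones M ≤ (univ : Finset (Fin n × Fin n)).card := Finset.card_filter_le _ _
  _ = n * n := by simp

section Blocks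

variable {K a : ℕ}

/-- the element `i*K+u` of `Fin (K*a)`; block `i`, offset `u`. -/
def blk (i : Fin a) (u : Fin K) : Fin (K * a) :=
  ⟨(i : ℕ) * K + u, by
    have h1 : (i : ℕ) + 1 ≤ a := i.2
    have h2 : (u : ℕ) < K := u.2
    calc (i : ℕ) * K + u < ((i : ℕ) + 1) * K := by rw [Nat.add_mul, one_mul]; omega
    _ ≤ a * K := Nat.mul_le_mul_right _ h1
    _ = K * a := Nat.mul_comm _ _⟩

lemma blk_lt_blk {i i' : Fin a} (u u' : Fin K) (h : i < i') : blk i u < blk i' u' := by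
  have h2 : (u : ℕ) < K := u.2
  have h3 : ((i : ℕ) + 1) * K ≤ (i' : ℕ) * K := Nat.mul_le_mul_right _ h
  simp only [blk, Fin.mk_lt_mk, Fin.lt_def] at *
  calc (i : ℕ) * K + u < ((i : ℕ) + 1) * K := by rw [Nat.add_mul, one_mul]; omega
  _ ≤ (i' : ℕ) * K := h3
  _ ≤ (i' : ℕ) * K + u' := Nat.le_add_right _ _

lemma blk_div {i : Fin a} {u : Fin K} : ((blk i u : Fin (K * a)) : ℕ) / K = i := by
  have h2 : (u : ℕ) < K := u.2
  have hK : 0 < K := by omega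
  simp only [blk]
  rw [Nat.mul_comm, Nat.mul_add_div hK, Nat.div_eq_of_lt h2, Nat.add_zero]

/-- contraction of a `(K*a) × (K*a)` matrix into an `a × a` matrix by `K×K` blocks -/
noncomputable def ctr (M : Fin (K * a) → Fin (K * a) → Bool) : Fin a → Fin a → Bool :=
  by classical exact fun i j => decide (∃ u v : Fin K, M (blk i u) (blk j v) = true)

lemma ctr_eq_true_iff {M : Fin (K * a) → Fin (K * a) → Bool} {i j : Fin a} :
    ctr M i j = true ↔ ∃ u v : Fin K, M (blk i u) (blk j v) = true := by
  classical
  simp [ctr]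

/-- copies of the contraction inject into copies of the matrix -/
lemma card_cpy_ctr_le (π : Equiv.Perm (Fin k)) (M : Fin (K * a) → Fin (K * a) → Bool)
    (hK : 0 < K) : (cpy π (ctr M)).card ≤ (cpy π M).card := by
  classical
  set F : ((Fin k → Fin a) × (Fin k → Fin a)) → Fin k → Fin (K * a) × Fin (K * a) := fun xy i =>
    if h : ∃ u v : Fin K, M (blk (xy.1 i) u) (blk (xy.2 (π i)) v) = true
    then (blk (xy.1 i) h.choose, blk (xy.2 (π i)) h.choose_spec.choose)
    else (blk (xy.1 i) ⟨0, hK⟩, blk (xy.2 (π i)) ⟨0, hK⟩) with hF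
  have hdiv1 : ∀ xy i, ((F xy i).1 : ℕ) / K = xy.1 i := by
    intro xy i
    simp only [hF]
    split <;> exact blk_div
  have hdiv2 : ∀ xy i, ((F xy i).2 : ℕ) / K = xy.2 (π i) := by
    intro xy i
    simp only [hF]
    split <;> exact blk_div
  have hspec : ∀ xy, xy ∈ cpy π (ctr M) → ∀ i, M (F xy i).1 (F xy i).2 = true := by
    intro xy hxy i
    have h := (mem_cpy.1 hxy).2.2 i
    rw [ctr_eq_true_iff] at h
    simp only [hF]
    rw [dif_pos h]
    exact h.choose_spec.choose_spec
  apply Finset.card_le_card_of_injOn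
    (fun xy => (fun i => (F xy i).1, fun j => (F xy (π.symm j)).2))
  · intro xy hxy
    obtain ⟨hx, hy, _⟩ := mem_cpy.1 hxy
    rw [mem_coe, mem_cpy]
    refine ⟨?_, ?_, ?_⟩
    · intro i i' hii
      have := hx hii
      simp only [hF]
      split <;> split <;> exact blk_lt_blk _ _ this
    · intro j j' hjj
      simp only [hF]
      split <;> split <;>
        exact blk_lt_blk _ _ (by simpa using hy hjj)
    · intro i
      have := hspec xy hxy i
      simpa using this
  · intro xy hxy xy' hxy' heq
    have h1 : ∀ i, ((F xy i).1 : ℕ) = ((F xy' i).1 : ℕ) := by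
      intro i; exact congrArg (fun f => ((f i : Fin (K*a)) : ℕ)) (congrArg Prod.fst heq)
    have h2 : ∀ j, ((F xy (π.symm j)).2 : ℕ) = ((F xy' (π.symm j)).2 : ℕ) := by
      intro j; exact congrArg (fun f => ((f j : Fin (K*a)) : ℕ)) (congrArg Prod.snd heq)
    have hx : xy.1 = xy'.1 := by
      funext i
      apply Fin.ext
      have := congrArg (· / K) (h1 i)
      simpa [hdiv1 xy i, hdiv1 xy' i] using this
    have hy : xy.2 = xy'.2 := by
      funext j
      apply Fin.ext
      have := congrArg (· / K) (h2 j)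
      have e1 : ((F xy (π.symm j)).2 : ℕ) / K = xy.2 (π (π.symm j)) := hdiv2 xy (π.symm j)
      have e2 : ((F xy' (π.symm j)).2 : ℕ) / K = xy'.2 (π (π.symm j)) := hdiv2 xy' (π.symm j)
      simp only [Equiv.apply_symm_apply] at e1 e2
      rw [e1, e2] at this
      exact this
    exact Prod.ext hx hy

end Blocks

end FewCopies

namespace FewCopies

section MTsec

variable {k K a : ℕ}

noncomputable def blkCells (M : Fin (K * a) → Fin (K * a) → Bool) (i j : Fin a) :
    Finset (Fin K × Fin K) := by
  classical exact univ.filter fun uv : Fin K × Fin K => M (blk i uv.1) (blk j uv.2) = true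

noncomputable def colsUsed (M : Fin (K * a) → Fin (K * a) → Bool) (i j : Fin a) :
    Finset (Fin K) := (blkCells M i j).image Prod.snd

noncomputable def rowsUsed (M : Fin (K * a) → Fin (K * a) → Bool) (i j : Fin a) :
    Finset (Fin K) := (blkCells M i j).image Prod.fst

lemma mem_colsUsed {M : Fin (K * a) → Fin (K * a) → Bool} {i j : Fin a} {v : Fin K} :
    v ∈ colsUsed M i j ↔ ∃ u, M (blk i u) (blk j v) = true := by
  classical
  simp only [colsUsed, blkCells, mem_image, mem_filter, mem_univ, true_and, Prod.exists]
  constructor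
  · rintro ⟨u, w, h, rfl⟩; exact ⟨u, h⟩
  · rintro ⟨u, h⟩; exact ⟨u, v, h, rfl⟩

lemma mem_rowsUsed {M : Fin (K * a) → Fin (K * a) → Bool} {i j : Fin a} {u : Fin K} :
    u ∈ rowsUsed M i j ↔ ∃ v, M (blk i u) (blk j v) = true := by
  classical
  simp only [rowsUsed, blkCells, mem_image, mem_filter, mem_univ, true_and, Prod.exists]
  constructor
  · rintro ⟨w, v, h, rfl⟩; exact ⟨v, h⟩
  · rintro ⟨v, h⟩; exact ⟨u, v, h, rfl⟩

lemma blk_lt_blk_right {i : Fin a} {u u' : Fin K} (h : u < u') : blk i u < blk i u' := by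
  simp only [blk, Fin.mk_lt_mk, Fin.lt_def] at *
  omega

/-- Marcus-Tardos core pigeonhole: in an avoiding matrix, each column strip has few
wide blocks. -/
lemma wide_strip_bound (hk : 0 < k) (π : Equiv.Perm (Fin k))
    (M : Fin (K * a) → Fin (K * a) → Bool) (hemp : cpy π M = ∅) (j : Fin a) :
    (univ.filter fun i : Fin a => k ≤ (colsUsed M i j).card).card ≤ (k - 1) * K.choose k := by
  classical
  by_contra hlt
  push_neg at hlt
  set W := univ.filter fun i : Fin a => k ≤ (colsUsed M i j).card with hW
  set f : Fin a → Finset (Fin K) := fun i =>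
    if h : k ≤ (colsUsed M i j).card then (Finset.exists_subset_card_eq h).choose else ∅
    with hf
  have hfsub : ∀ i : Fin a, k ≤ (colsUsed M i j).card → f i ⊆ colsUsed M i j ∧ (f i).card = k := by
    intro i h
    rw [hf]
    simp only [dif_pos h]
    exact (Finset.exists_subset_card_eq h).choose_spec
  have hmaps : ∀ i ∈ W, f i ∈ (univ : Finset (Fin K)).powersetCard k := by
    intro i hi
    rw [hW, mem_filter] at hi
    exact Finset.mem_powersetCard_univ.2 (hfsub i hi.2).2
  have ht : ((univ : Finset (Fin K)).powersetCard k).card * (k - 1) < W.card := by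
    rw [Finset.card_powersetCard, card_univ, Fintype.card_fin]
    calc (K.choose k) * (k-1) = (k-1) * K.choose k := Nat.mul_comm _ _
    _ < W.card := hlt
  obtain ⟨S, hS, hfib⟩ := Finset.exists_lt_card_fiber_of_mul_lt_card_of_maps_to hmaps ht
  have hScard : S.card = k := Finset.mem_powersetCard_univ.1 hS
  obtain ⟨B, hBsub, hBcard⟩ := Finset.exists_subset_card_eq
    (show k ≤ (W.filter fun i => f i = S).card by omega)
  set I : Fin k ↪o Fin a := B.orderEmbOfFin hBcard with hI
  set c : Fin k ↪o Fin K := S.orderEmbOfFin hScard with hc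
  have key : ∀ (i : Fin k) (v : Fin K), v ∈ S → ∃ u, M (blk (I i) u) (blk j v) = true := by
    intro i v hv
    have hIB : I i ∈ B := Finset.orderEmbOfFin_mem _ _ _
    have hIW := hBsub hIB
    rw [mem_filter] at hIW
    obtain ⟨hIW1, hIfS⟩ := hIW
    rw [hW, mem_filter] at hIW1
    have hwide := hIW1.2
    have hsub : S ⊆ colsUsed M (I i) j := by
      rw [← hIfS]; exact (hfsub _ hwide).1
    exact mem_colsUsed.1 (hsub hv)
  have hkey : ∀ i : Fin k, ∃ u, M (blk (I i) u) (blk j (c (π i))) = true := by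
    intro i
    exact key i (c (π i)) (Finset.orderEmbOfFin_mem _ _ _)
  set x : Fin k → Fin (K * a) := fun i => blk (I i) ((hkey i).choose) with hx
  set y : Fin k → Fin (K * a) := fun jj => blk j (c jj) with hy
  have hmem : (x, y) ∈ cpy π M := by
    rw [mem_cpy]
    refine ⟨?_, ?_, ?_⟩
    · intro i i' hii
      exact blk_lt_blk _ _ (I.strictMono hii)
    · intro jj jj' hjj
      exact blk_lt_blk_right (c.strictMono hjj)
    · intro i
      exact (hkey i).choose_spec
  rw [hemp] at hmem
  exact absurd hmem (Finset.notMem_empty _)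

end MTsec

end FewCopies

namespace FewCopies

section MTsec2

variable {k K a : ℕ}

lemma transpose_cpy_empty {n : ℕ} (π : Equiv.Perm (Fin k)) {M : Fin n → Fin n → Bool}
    (h : cpy π M = ∅) : cpy π.symm (fun x y => M y x) = ∅ := by
  classical
  rw [Finset.eq_empty_iff_forall_notMem] at *
  intro xy hxy
  rw [mem_cpy] at hxy
  obtain ⟨hx, hy, hc⟩ := hxy
  apply h (xy.2, xy.1)
  rw [mem_cpy]
  refine ⟨hy, hx, fun i => ?_⟩
  have := hc (π i)
  simpa using this

lemma rowsUsed_eq_colsUsed_transpose {M : Fin (K * a) → Fin (K * a) → Bool} {i j : Fin a} :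
    rowsUsed M i j = colsUsed (fun x y => M y x) j i := by
  ext u
  rw [mem_rowsUsed, mem_colsUsed]

lemma wide_total (hk : 0 < k) (π : Equiv.Perm (Fin k))
    (M : Fin (K * a) → Fin (K * a) → Bool) (hemp : cpy π M = ∅) :
    (univ.filter fun p : Fin a × Fin a => k ≤ (colsUsed M p.1 p.2).card).card
      ≤ a * ((k - 1) * K.choose k) := by
  classical
  rw [Finset.card_eq_sum_card_fiberwise (f := Prod.snd) (t := univ) (fun x _ => mem_univ _)]
  have hle : ∀ j : Fin a,
      (((univ.filter fun p : Fin a × Fin a => k ≤ (colsUsed M p.1 p.2).card).filter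
        fun p => p.2 = j)).card ≤ (k - 1) * K.choose k := by
    intro j
    refine le_trans ?_ (wide_strip_bound hk π M hemp j)
    apply Finset.card_le_card_of_injOn (fun p => p.1)
    · intro p hp
      simp only [mem_coe, mem_filter, mem_univ, true_and] at hp ⊢
      rw [hp.2] at hp
      exact hp.1
    · intro p hp q hq hpq
      simp only [mem_coe, mem_filter] at hp hq
      exact Prod.ext hpq (hp.2.trans hq.2.symm)
  calc ∑ j : Fin a, (((univ.filter fun p : Fin a × Fin a =>
        k ≤ (colsUsed M p.1 p.2).card).filter fun p => p.2 = j)).card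
      ≤ ∑ _j : Fin a, (k - 1) * K.choose k := Finset.sum_le_sum fun j _ => hle j
    _ = a * ((k - 1) * K.choose k) := by simp [Finset.sum_const, card_univ]

lemma tall_total (hk : 0 < k) (π : Equiv.Perm (Fin k))
    (M : Fin (K * a) → Fin (K * a) → Bool) (hemp : cpy π M = ∅) :
    (univ.filter fun p : Fin a × Fin a => k ≤ (rowsUsed M p.1 p.2).card).card
      ≤ a * ((k - 1) * K.choose k) := by
  classical
  have hT := wide_total hk π.symm (fun x y => M y x) (transpose_cpy_empty π hemp)
  refine le_trans (le_of_eq ?_) hT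
  apply Finset.card_nbij (fun p => (p.2, p.1))
  · intro p hp
    simp only [mem_coe, mem_filter, mem_univ, true_and] at hp ⊢
    rwa [← rowsUsed_eq_colsUsed_transpose]
  · intro p hp q hq hpq
    simp only [Prod.mk.injEq] at hpq
    exact Prod.ext hpq.2 hpq.1
  · intro q hq
    simp only [Set.mem_image, mem_coe, mem_filter, mem_univ, true_and] at hq ⊢
    exact ⟨(q.2, q.1), by rw [rowsUsed_eq_colsUsed_transpose]; exact hq, Prod.mk.eta⟩

def pdiv (hK : 0 < K) (x : Fin (K * a)) : Fin a :=
  ⟨(x : ℕ) / K, by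
    rw [Nat.div_lt_iff_lt_mul hK]
    calc (x : ℕ) < K * a := x.2
    _ = a * K := Nat.mul_comm _ _⟩

def pmod (hK : 0 < K) (x : Fin (K * a)) : Fin K := ⟨(x : ℕ) % K, Nat.mod_lt _ hK⟩

lemma blk_mod {i : Fin a} {u : Fin K} : ((blk i u : Fin (K * a)) : ℕ) % K = u := by
  simp only [blk]
  rw [Nat.add_comm, Nat.add_mul_mod_self_right, Nat.mod_eq_of_lt u.2]

lemma blk_decomp (hK : 0 < K) (x : Fin (K * a)) : blk (pdiv hK x) (pmod hK x) = x := by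
  apply Fin.ext
  simp only [blk, pdiv, pmod]
  rw [Nat.mul_comm]
  exact Nat.div_add_mod _ _

lemma ones_eq_sum_blk (hK : 0 < K) (M : Fin (K * a) → Fin (K * a) → Bool) :
    ones M = ∑ p : Fin a × Fin a, (blkCells M p.1 p.2).card := by
  classical
  rw [ones]
  rw [Finset.card_eq_sum_card_fiberwise
    (f := fun q : Fin (K * a) × Fin (K * a) => ((pdiv hK q.1, pdiv hK q.2) : Fin a × Fin a))
    (t := univ) (fun x _ => mem_univ _)]
  apply Finset.sum_congr rfl
  intro p _
  apply Finset.card_bij' (i := fun q _ => ((pmod hK q.1, pmod hK q.2) : Fin K × Fin K))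
    (j := fun uv _ => ((blk p.1 uv.1, blk p.2 uv.2) : Fin (K * a) × Fin (K * a)))
  · intro q hq
    simp only [mem_filter, mem_univ, true_and] at hq
    obtain ⟨hM, hpq⟩ := hq
    subst hpq
    rw [blkCells, mem_filter]
    refine ⟨mem_univ _, ?_⟩
    show M (blk (pdiv hK q.1) (pmod hK q.1)) (blk (pdiv hK q.2) (pmod hK q.2)) = true
    rw [blk_decomp hK, blk_decomp hK]
    exact hM
  · intro uv huv
    rw [blkCells, mem_filter] at huv
    simp only [mem_filter, mem_univ, true_and]
    refine ⟨huv.2, Prod.ext ?_ ?_⟩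
    · apply Fin.ext; exact blk_div
    · apply Fin.ext; exact blk_div
  · intro q hq
    simp only [mem_filter, mem_univ, true_and] at hq
    obtain ⟨hM, hpq⟩ := hq
    subst hpq
    exact Prod.ext (blk_decomp hK q.1) (blk_decomp hK q.2)
  · intro uv huv
    apply Prod.ext
    · apply Fin.ext; exact blk_mod
    · apply Fin.ext; exact blk_mod

lemma blkCells_card_le_used {M : Fin (K * a) → Fin (K * a) → Bool} {i j : Fin a} :
    (blkCells M i j).card ≤ (rowsUsed M i j).card * (colsUsed M i j).card := by
  classical
  calc (blkCells M i j).card ≤ ((rowsUsed M i j) ×ˢ (colsUsed M i j)).card := by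
        apply Finset.card_le_card
        intro uv huv
        rw [Finset.mem_product]
        exact ⟨Finset.mem_image_of_mem _ huv, Finset.mem_image_of_mem _ huv⟩
  _ = _ := Finset.card_product _ _

lemma blkCells_card_le_sq {M : Fin (K * a) → Fin (K * a) → Bool} {i j : Fin a} :
    (blkCells M i j).card ≤ K * K := by
  classical
  calc (blkCells M i j).card ≤ (univ : Finset (Fin K × Fin K)).card := Finset.card_filter_le _ _
  _ = K * K := by simp

lemma blkCells_empty_of_ctr_false {M : Fin (K * a) → Fin (K * a) → Bool} {i j : Fin a}
    (h : ¬ ctr M i j = true) : blkCells M i j = ∅ := by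
  classical
  rw [Finset.eq_empty_iff_forall_notMem]
  intro uv huv
  rw [blkCells, mem_filter] at huv
  exact h (ctr_eq_true_iff.2 ⟨uv.1, uv.2, huv.2⟩)

/-- one step of the Marcus–Tardos recursion -/
lemma ones_step (hk : 0 < k) (hK : 0 < K) (π : Equiv.Perm (Fin k))
    (M : Fin (K * a) → Fin (K * a) → Bool) (hemp : cpy π M = ∅) :
    ones M ≤ (k - 1) * (k - 1) * ones (ctr M)
      + (K * K) * (2 * (a * ((k - 1) * K.choose k))) := by
  classical
  rw [ones_eq_sum_blk hK]
  rw [← Finset.sum_filter_add_sum_filter_not univ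
    (fun p : Fin a × Fin a => k ≤ (rowsUsed M p.1 p.2).card ∨ k ≤ (colsUsed M p.1 p.2).card)]
  have h1 : (∑ p ∈ univ.filter (fun p : Fin a × Fin a =>
      k ≤ (rowsUsed M p.1 p.2).card ∨ k ≤ (colsUsed M p.1 p.2).card),
      (blkCells M p.1 p.2).card) ≤ (K * K) * (2 * (a * ((k - 1) * K.choose k))) := by
    calc _ ≤ ∑ p ∈ univ.filter (fun p : Fin a × Fin a =>
          k ≤ (rowsUsed M p.1 p.2).card ∨ k ≤ (colsUsed M p.1 p.2).card), (K * K) :=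
        Finset.sum_le_sum fun p _ => blkCells_card_le_sq
    _ = (univ.filter (fun p : Fin a × Fin a =>
          k ≤ (rowsUsed M p.1 p.2).card ∨ k ≤ (colsUsed M p.1 p.2).card)).card * (K * K) := by
        rw [Finset.sum_const, smul_eq_mul]
    _ ≤ (2 * (a * ((k - 1) * K.choose k))) * (K * K) := by
        apply Nat.mul_le_mul_right
        calc (univ.filter (fun p : Fin a × Fin a =>
              k ≤ (rowsUsed M p.1 p.2).card ∨ k ≤ (colsUsed M p.1 p.2).card)).card
            ≤ (univ.filter fun p : Fin a × Fin a => k ≤ (rowsUsed M p.1 p.2).card).card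
              + (univ.filter fun p : Fin a × Fin a => k ≤ (colsUsed M p.1 p.2).card).card := by
              rw [Finset.filter_or]
              exact Finset.card_union_le _ _
        _ ≤ a * ((k - 1) * K.choose k) + a * ((k - 1) * K.choose k) :=
              Nat.add_le_add (tall_total hk π M hemp) (wide_total hk π M hemp)
        _ = 2 * (a * ((k - 1) * K.choose k)) := by ring
    _ = (K * K) * (2 * (a * ((k - 1) * K.choose k))) := Nat.mul_comm _ _
  have h2 : (∑ p ∈ univ.filter (fun p : Fin a × Fin a =>
      ¬(k ≤ (rowsUsed M p.1 p.2).card ∨ k ≤ (colsUsed M p.1 p.2).card)),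
      (blkCells M p.1 p.2).card) ≤ (k - 1) * (k - 1) * ones (ctr M) := by
    have hpt : ∀ p ∈ univ.filter (fun p : Fin a × Fin a =>
        ¬(k ≤ (rowsUsed M p.1 p.2).card ∨ k ≤ (colsUsed M p.1 p.2).card)),
        (blkCells M p.1 p.2).card
          ≤ (k - 1) * (k - 1) * (if ctr M p.1 p.2 = true then 1 else 0) := by
      intro p hp
      rw [mem_filter] at hp
      push_neg at hp
      obtain ⟨-, hr, hc⟩ := hp
      by_cases hct : ctr M p.1 p.2 = true
      · rw [if_pos hct, Nat.mul_one]
        calc (blkCells M p.1 p.2).card ≤ (rowsUsed M p.1 p.2).card * (colsUsed M p.1 p.2).card :=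
              blkCells_card_le_used
        _ ≤ (k - 1) * (k - 1) := Nat.mul_le_mul (by omega) (by omega)
      · rw [if_neg hct, Nat.mul_zero, blkCells_empty_of_ctr_false hct, Finset.card_empty]
    calc _ ≤ ∑ p ∈ univ.filter (fun p : Fin a × Fin a =>
          ¬(k ≤ (rowsUsed M p.1 p.2).card ∨ k ≤ (colsUsed M p.1 p.2).card)),
          (k - 1) * (k - 1) * (if ctr M p.1 p.2 = true then 1 else 0) :=
        Finset.sum_le_sum hpt
    _ ≤ ∑ p : Fin a × Fin a, (k - 1) * (k - 1) * (if ctr M p.1 p.2 = true then 1 else 0) :=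
        Finset.sum_le_sum_of_subset (Finset.filter_subset _ _)
    _ = (k - 1) * (k - 1) * ∑ p : Fin a × Fin a, (if ctr M p.1 p.2 = true then 1 else 0) := by
        rw [Finset.mul_sum]
    _ = (k - 1) * (k - 1) * ones (ctr M) := by
        congr 1
        rw [ones, Finset.sum_boole]
        simp
  omega

end MTsec2

end FewCopies

namespace FewCopies

section Pad

variable {k : ℕ}

def padM {n N : ℕ} (M : Fin n → Fin n → Bool) : Fin N → Fin N → Bool :=
  fun x y => if hx : (x : ℕ) < n ∧ (y : ℕ) < n then M ⟨x, hx.1⟩ ⟨y, hx.2⟩ else false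

lemma padM_true_iff {n N : ℕ} {M : Fin n → Fin n → Bool} {x y : Fin N} :
    padM M x y = true ↔ ∃ (hx : (x : ℕ) < n) (hy : (y : ℕ) < n), M ⟨x, hx⟩ ⟨y, hy⟩ = true := by
  rw [padM]
  split
  · rename_i h
    exact ⟨fun ht => ⟨h.1, h.2, ht⟩, fun ⟨hx, hy, ht⟩ => ht⟩
  · rename_i h
    simp only [Bool.false_eq_true, false_iff]
    rintro ⟨hx, hy, -⟩
    exact h ⟨hx, hy⟩

lemma ones_padM {n N : ℕ} (h : n ≤ N) (M : Fin n → Fin n → Bool) :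
    ones (padM M : Fin N → Fin N → Bool) = ones M := by
  classical
  rw [ones, ones]
  refine Finset.card_bij' (i := fun (q : Fin N × Fin N) hq =>
      ((⟨(q.1 : ℕ), by
          have := (mem_filter.1 hq).2
          exact (padM_true_iff.1 this).choose⟩ : Fin n),
       (⟨(q.2 : ℕ), by
          have := (mem_filter.1 hq).2
          exact (padM_true_iff.1 this).choose_spec.choose⟩ : Fin n)))
    (j := fun (p : Fin n × Fin n) _ => ((Fin.castLE h p.1, Fin.castLE h p.2) : Fin N × Fin N))
    ?hi ?hj ?li ?ri
  case hi =>
    intro q hq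
    rw [mem_filter] at hq ⊢
    refine ⟨mem_univ _, ?_⟩
    have := (padM_true_iff.1 hq.2).choose_spec.choose_spec
    convert this
  case hj =>
    intro p hp
    rw [mem_filter] at hp ⊢
    refine ⟨mem_univ _, ?_⟩
    rw [padM_true_iff]
    refine ⟨by simpa using p.1.2, by simpa using p.2.2, ?_⟩
    exact hp.2
  case li =>
    intro q hq
    refine Prod.ext (Fin.val_injective ?_) (Fin.val_injective ?_) <;> simp [Fin.castLE]
  case ri =>
    intro p hp
    refine Prod.ext (Fin.val_injective ?_) (Fin.val_injective ?_) <;> simp [Fin.castLE]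

lemma card_cpy_padM_le {n N : ℕ} (hn : 0 < n) (π : Equiv.Perm (Fin k))
    (M : Fin n → Fin n → Bool) :
    (cpy π (padM M : Fin N → Fin N → Bool)).card ≤ (cpy π M).card := by
  classical
  have hlt : ∀ (xy : (Fin k → Fin N) × (Fin k → Fin N)), xy ∈ cpy π (padM M) →
      (∀ i, (xy.1 i : ℕ) < n) ∧ (∀ j, (xy.2 j : ℕ) < n) := by
    intro xy hxy
    have hc := (mem_cpy.1 hxy).2.2
    constructor
    · intro i
      exact (padM_true_iff.1 (hc i)).choose
    · intro j
      have := hc (π.symm j)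
      have h2 := (padM_true_iff.1 this).choose_spec.choose
      simpa using h2
  set G : ((Fin k → Fin N) × (Fin k → Fin N)) → ((Fin k → Fin n) × (Fin k → Fin n)) :=
    fun xy => ((fun i => if hi : (xy.1 i : ℕ) < n then ⟨xy.1 i, hi⟩ else ⟨0, hn⟩),
               (fun j => if hj : (xy.2 j : ℕ) < n then ⟨xy.2 j, hj⟩ else ⟨0, hn⟩)) with hG
  apply Finset.card_le_card_of_injOn G
  · intro xy hxy
    obtain ⟨hr, hcc⟩ := hlt xy hxy
    obtain ⟨hx, hy, hc⟩ := mem_cpy.1 hxy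
    rw [mem_coe, mem_cpy]
    refine ⟨?_, ?_, ?_⟩
    · intro i i' hii
      have := hx hii
      simp only [hG, dif_pos (hr i), dif_pos (hr i')]
      exact this
    · intro j j' hjj
      have := hy hjj
      simp only [hG, dif_pos (hcc j), dif_pos (hcc j')]
      exact this
    · intro i
      have := hc i
      rw [padM_true_iff] at this
      obtain ⟨h1, h2, h3⟩ := this
      simp only [hG, dif_pos (hr i), dif_pos (hcc (π i))]
      convert h3
  · intro xy hxy xy' hxy' heq
    obtain ⟨hr, hcc⟩ := hlt xy hxy
    obtain ⟨hr', hcc'⟩ := hlt xy' hxy'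
    have e1 := congrArg Prod.fst heq
    have e2 := congrArg Prod.snd heq
    apply Prod.ext
    · funext i
      have := congrFun e1 i
      simp only [hG, dif_pos (hr i), dif_pos (hr' i)] at this
      have h5 : (xy.1 i : ℕ) = (xy'.1 i : ℕ) := congrArg (Fin.val : Fin n → ℕ) this
      exact Fin.val_injective h5
    · funext j
      have := congrFun e2 j
      simp only [hG, dif_pos (hcc j), dif_pos (hcc' j)] at this
      have h5 : (xy.2 j : ℕ) = (xy'.2 j : ℕ) := congrArg (Fin.val : Fin n → ℕ) this
      exact Fin.val_injective h5

end Pad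

/-- The Marcus–Tardos theorem: matrices avoiding a `k`-permutation have a linear
number of ones. -/
theorem mt_linear (hk : 1 < k) :
    ∃ c0 : ℕ, k ≤ c0 ∧ 1 ≤ c0 ∧ ∀ (σ : Equiv.Perm (Fin k)) (n : ℕ)
      (M : Fin n → Fin n → Bool), cpy σ M = ∅ → ones M ≤ c0 * n := by
  classical
  set D : ℕ := 2 * k ^ 5 * ((k * k).choose k) with hD
  have hk0 : 0 < k := by omega
  have hDpos : 1 ≤ D := by
    have h1 : 0 < (k * k).choose k :=
      Nat.choose_pos (Nat.le_mul_of_pos_left k hk0)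
    have h2 : 0 < 2 * k ^ 5 := by positivity
    exact Nat.mul_pos h2 h1
  have hkk3 : k ≤ k ^ 3 := Nat.le_self_pow (by norm_num) k
  refine ⟨k ^ 3 * D, ?_, ?_, ?_⟩
  · calc k ≤ k ^ 3 := hkk3
    _ = k ^ 3 * 1 := (Nat.mul_one _).symm
    _ ≤ k ^ 3 * D := Nat.mul_le_mul_left _ hDpos
  · have h3 : 0 < k ^ 3 := by positivity
    have := Nat.mul_pos h3 hDpos
    omega
  intro σ n
  induction n using Nat.strong_induction_on with
  | _ n IH =>
    intro M hemp
    by_cases hsmall : n < k ^ 3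
    · calc ones M ≤ n * n := ones_le_sq M
      _ ≤ k ^ 3 * n := Nat.mul_le_mul_right _ (by omega)
      _ ≤ k ^ 3 * D * n := by
          apply Nat.mul_le_mul_right
          calc k ^ 3 = k ^ 3 * 1 := (Nat.mul_one _).symm
          _ ≤ k ^ 3 * D := Nat.mul_le_mul_left _ hDpos
    · push_neg at hsmall
      set K : ℕ := k * k with hK
      have hk2 : 2 ≤ k := hk
      have hKpos : 0 < K := Nat.mul_pos hk0 hk0
      have hK4 : 4 ≤ K := Nat.mul_le_mul hk2 hk2
      set a : ℕ := (n + K - 1) / K with ha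
      have hdm := Nat.div_add_mod (n + K - 1) K
      rw [← ha] at hdm
      have hmlt : (n + K - 1) % K < K := Nat.mod_lt _ hKpos
      have h1 : n ≤ K * a := by omega
      have h2 : K * a ≤ n + K - 1 := by omega
      have hKn : K ≤ n := by
        calc K = k * k := rfl
        _ ≤ (k * k) * k := Nat.le_mul_of_pos_right _ hk0
        _ = k ^ 3 := by ring
        _ ≤ n := hsmall
      have halt : a < n := by
        by_contra hh
        push_neg at hh
        have : K * n ≤ K * a := Nat.mul_le_mul_left _ hh
        have h4n : 4 * n ≤ K * n := Nat.mul_le_mul_right _ hK4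
        omega
      have hnpos : 0 < n := by omega
      set M' : Fin (K * a) → Fin (K * a) → Bool := padM M with hM'
      have hemp' : cpy σ M' = ∅ := by
        rw [← Finset.card_eq_zero]
        have := card_cpy_padM_le (N := K * a) hnpos σ M
        rw [hemp] at this
        simpa using this
      have hctr : cpy σ (ctr M') = ∅ := by
        rw [← Finset.card_eq_zero]
        have := card_cpy_ctr_le σ M' hKpos
        rw [hemp'] at this
        simpa using this
      have hIH : ones (ctr M') ≤ k ^ 3 * D * a := IH a halt (ctr M') hctr
      have hstep := ones_step (by omega) hKpos σ M' hemp'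
      have hones : ones M = ones M' := (ones_padM h1 M).symm
      -- junk term bound : K*K*(2*(a*((k-1)*K.choose k))) ≤ D * a
      have hjunk : (K * K) * (2 * (a * ((k - 1) * K.choose k))) ≤ D * a := by
        rw [hD, hK]
        have h5 : (k * k) * (k * k) * (2 * (a * ((k - 1) * ((k * k).choose k))))
            = 2 * ((k * k) * (k * k) * (k - 1)) * ((k * k).choose k) * a := by ring
        rw [h5]
        apply Nat.mul_le_mul_right
        apply Nat.mul_le_mul_right
        have : (k * k) * (k * k) * (k - 1) ≤ k ^ 5 := by
          have hkk : k - 1 ≤ k := by omega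
          calc (k * k) * (k * k) * (k - 1) ≤ (k * k) * (k * k) * k := Nat.mul_le_mul_left _ hkk
          _ = k ^ 5 := by ring
        omega
      -- main arithmetic
      have harith : ((k - 1) * (k - 1) * (k ^ 3 * D) + D) * a ≤ k ^ 3 * D * n := by
        refine Nat.le_of_mul_le_mul_left ?_ hKpos
        calc K * (((k - 1) * (k - 1) * (k ^ 3 * D) + D) * a)
            = ((k - 1) * (k - 1) * (k ^ 3 * D) + D) * (K * a) := by ring
        _ ≤ ((k - 1) * (k - 1) * (k ^ 3 * D) + D) * (n + K) :=
              Nat.mul_le_mul_left _ (by omega)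
        _ ≤ K * (k ^ 3 * D * n) := by
              -- with e := k-1
              obtain ⟨e, he⟩ : ∃ e, k = e + 1 := ⟨k - 1, by omega⟩
              subst he
              have he1 : 1 ≤ e := by omega
              have hn3 : (e + 1) ^ 3 ≤ n := hsmall
              simp only [Nat.add_sub_cancel]
              have key : (e * e * ((e+1) ^ 3) + 1) * (n + (e+1)*(e+1)) ≤ (e+1)*(e+1) * ((e+1) ^ 3 * n) := by
                have hp1 : 1 ≤ e * (e+1) ^ 3 := by
                  have : 0 < e * (e+1) ^ 3 := Nat.mul_pos (by omega) (by positivity)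
                  omega
                have s1 : e * e * (e+1) ^ 3 + 1 ≤ e * (e+1) ^ 4 := by
                  have hexp : e * (e+1) ^ 4 = e * e * (e+1) ^ 3 + e * (e+1) ^ 3 := by ring
                  omega
                have s2 : e * (e+1) ^ 2 ≤ n := by
                  refine le_trans ?_ hn3
                  have : (e+1) ^ 3 = (e+1) * (e+1) ^ 2 := by ring
                  rw [this]
                  exact Nat.mul_le_mul_right _ (by omega)
                have s3 : e * (e+1) ^ 6 ≤ (e+1) ^ 4 * n := by
                  calc e * (e+1) ^ 6 = (e * (e+1) ^ 2) * (e+1) ^ 4 := by ring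
                  _ ≤ n * (e+1) ^ 4 := Nat.mul_le_mul_right _ s2
                  _ = (e+1) ^ 4 * n := Nat.mul_comm _ _
                calc (e * e * ((e+1) ^ 3) + 1) * (n + (e+1)*(e+1))
                    ≤ (e * (e+1) ^ 4) * (n + (e+1)*(e+1)) := Nat.mul_le_mul_right _ s1
                _ = e * (e+1) ^ 4 * n + e * (e+1) ^ 6 := by ring
                _ ≤ e * (e+1) ^ 4 * n + (e+1) ^ 4 * n := Nat.add_le_add_left s3 _
                _ = (e+1)*(e+1) * ((e+1) ^ 3 * n) := by ring
              calc (e * e * ((e + 1) ^ 3 * D) + D) * (n + (e+1)*(e+1))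
                  = ((e * e * ((e+1) ^ 3) + 1) * (n + (e+1)*(e+1))) * D := by ring
              _ ≤ ((e+1)*(e+1) * ((e+1) ^ 3 * n)) * D := Nat.mul_le_mul_right _ key
              _ = (e+1)*(e+1) * ((e+1) ^ 3 * D * n) := by ring
      calc ones M = ones M' := hones
      _ ≤ (k - 1) * (k - 1) * ones (ctr M') + (K * K) * (2 * (a * ((k - 1) * K.choose k))) := hstep
      _ ≤ (k - 1) * (k - 1) * (k ^ 3 * D * a) + D * a := by
          apply Nat.add_le_add _ hjunk
          exact Nat.mul_le_mul_left _ hIH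
      _ = ((k - 1) * (k - 1) * (k ^ 3 * D) + D) * a := by ring
      _ ≤ k ^ 3 * D * n := harith

end FewCopies

namespace FewCopies

variable {k : ℕ}

/-- Deletion lemma: copies plus linear term bounds the number of ones. -/
lemma deletion (hk : 0 < k) (c0 : ℕ)
    (hc : ∀ (σ : Equiv.Perm (Fin k)) (n : ℕ) (M : Fin n → Fin n → Bool),
      cpy σ M = ∅ → ones M ≤ c0 * n)
    (σ : Equiv.Perm (Fin k)) :
    ∀ (q n : ℕ) (M : Fin n → Fin n → Bool), ones M ≤ q →
      ones M ≤ c0 * n + (cpy σ M).card := by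
  intro q
  induction q with
  | zero => intro n M h; omega
  | succ q IH =>
    intro n M h
    classical
    by_cases hbig : ones M ≤ c0 * n
    · omega
    push_neg at hbig
    have hne : cpy σ M ≠ ∅ := by
      intro he
      exact absurd (hc σ n M he) (by omega)
    obtain ⟨xy, hxy⟩ := Finset.nonempty_of_ne_empty hne
    obtain ⟨hx, hy, hcv⟩ := mem_cpy.1 hxy
    set i0 : Fin k := ⟨0, hk⟩ with hi0
    set cell : Fin n × Fin n := (xy.1 i0, xy.2 (σ i0)) with hcell
    set M' : Fin n → Fin n → Bool :=
      fun a b => if a = cell.1 ∧ b = cell.2 then false else M a b with hM'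
    have hM'def : ∀ a b, M' a b = if a = cell.1 ∧ b = cell.2 then false else M a b :=
      fun a b => rfl
    have hM'le : ∀ a b, M' a b = true → M a b = true := by
      intro a b hab
      rw [hM'def] at hab
      by_cases hc2 : a = cell.1 ∧ b = cell.2
      · rw [if_pos hc2] at hab; exact absurd hab (by simp)
      · rwa [if_neg hc2] at hab
    have hones' : ones M' + 1 = ones M := by
      have hfe : (univ.filter fun p : Fin n × Fin n => M' p.1 p.2 = true)
          = (univ.filter fun p : Fin n × Fin n => M p.1 p.2 = true).erase cell := by
        ext p
        rw [Finset.mem_erase, mem_filter, mem_filter]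
        constructor
        · intro hp
          have hMp := hM'le _ _ hp.2
          refine ⟨?_, hp.1, hMp⟩
          intro hpc
          have : M' p.1 p.2 = false := by
            rw [hM'def, if_pos ⟨by rw [hpc], by rw [hpc]⟩]
          rw [this] at hp
          exact absurd hp.2 (by simp)
        · intro hp
          refine ⟨hp.2.1, ?_⟩
          rw [hM'def, if_neg ?_]
          · exact hp.2.2
          · intro hcc
            exact hp.1 (Prod.ext hcc.1 hcc.2)
      have hmem : cell ∈ (univ.filter fun p : Fin n × Fin n => M p.1 p.2 = true) := by
        rw [mem_filter]
        exact ⟨mem_univ _, hcv i0⟩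
      have hpos : 0 < (univ.filter fun p : Fin n × Fin n => M p.1 p.2 = true).card :=
        Finset.card_pos.2 ⟨cell, hmem⟩
      rw [ones, ones, hfe, Finset.card_erase_of_mem hmem]
      omega
    have hsub : cpy σ M' ⊆ cpy σ M := cpy_subset_of_le σ hM'le
    have hnotin : xy ∉ cpy σ M' := by
      intro hin
      have := (mem_cpy.1 hin).2.2 i0
      have hfalse : M' (xy.1 i0) (xy.2 (σ i0)) = false := by
        rw [hM'def, if_pos ⟨rfl, rfl⟩]
      rw [hfalse] at this
      exact absurd this (by simp)
    have hcard : (cpy σ M').card + 1 ≤ (cpy σ M).card := by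
      have : cpy σ M' ⊂ cpy σ M := ⟨hsub, fun hss => hnotin (hss hxy)⟩
      have := Finset.card_lt_card this
      omega
    have hIH := IH n M' (by omega)
    omega

section Sampling

variable {n r : ℕ}

/-- the finset of strictly monotone maps `Fin r → Fin n` -/
noncomputable def monoSet (r n : ℕ) : Finset (Fin r → Fin n) := by
  classical exact univ.filter StrictMono

lemma mem_monoSet {ρ : Fin r → Fin n} : ρ ∈ monoSet r n ↔ StrictMono ρ := by
  classical
  simp [monoSet]

/-- counting subsets of fixed size containing a fixed set -/
lemma card_powersetCard_filter_supset (T : Finset (Fin n)) (ht : T.card ≤ r) :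
    (((univ : Finset (Fin n)).powersetCard r).filter fun R => T ⊆ R).card
      = (n - T.card).choose (r - T.card) := by
  classical
  have hbij : (((univ : Finset (Fin n)).powersetCard r).filter fun R => T ⊆ R).card
      = (((univ : Finset (Fin n)) \ T).powersetCard (r - T.card)).card := by
    apply Finset.card_nbij' (i := fun R => R \ T) (j := fun S => S ∪ T)
    · intro R hR
      rw [mem_coe, mem_filter, Finset.mem_powersetCard] at hR
      obtain ⟨⟨hsub, hcard⟩, hTR⟩ := hR
      rw [mem_coe, Finset.mem_powersetCard]
      constructor
      · intro x hx
        rw [Finset.mem_sdiff] at hx ⊢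
        exact ⟨mem_univ _, hx.2⟩
      · rw [Finset.card_sdiff_of_subset hTR, hcard]
    · intro S hS
      rw [mem_coe, Finset.mem_powersetCard] at hS
      obtain ⟨hsub, hcard⟩ := hS
      have hdisj : Disjoint S T := by
        rw [Finset.disjoint_right]
        intro x hxT hxS
        have := hsub hxS
        rw [Finset.mem_sdiff] at this
        exact this.2 hxT
      rw [mem_coe, mem_filter, Finset.mem_powersetCard]
      refine ⟨⟨Finset.subset_univ _, ?_⟩, Finset.subset_union_right⟩
      rw [Finset.card_union_of_disjoint hdisj, hcard]
      omega
    · intro R hR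
      rw [mem_coe, mem_filter] at hR
      exact Finset.sdiff_union_of_subset hR.2
    · intro S hS
      rw [mem_coe, Finset.mem_powersetCard] at hS
      apply Finset.union_sdiff_cancel_right
      rw [Finset.disjoint_right]
      intro x hxT hxS
      have := hS.1 hxS
      rw [Finset.mem_sdiff] at this
      exact this.2 hxT
  rw [hbij, Finset.card_powersetCard, Finset.card_sdiff_of_subset (Finset.subset_univ _),
    Finset.card_univ, Fintype.card_fin]

/-- strictly monotone maps with a condition on the image are counted by subsets. -/
lemma card_monoSet_filter (Q : Finset (Fin n) → Prop) :
    ∀ [DecidablePred Q],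
    ((monoSet r n).filter fun ρ => Q (univ.image ρ)).card
      = (((univ : Finset (Fin n)).powersetCard r).filter Q).card := by
  classical
  intro _
  apply Finset.card_nbij (i := fun ρ => univ.image ρ)
  · intro ρ hρ
    rw [mem_coe, mem_filter] at hρ
    obtain ⟨hρm, hQ⟩ := hρ
    have hsm : StrictMono ρ := mem_monoSet.1 hρm
    rw [mem_coe, mem_filter, Finset.mem_powersetCard]
    refine ⟨⟨Finset.subset_univ _, ?_⟩, hQ⟩
    rw [Finset.card_image_of_injective _ hsm.injective, Finset.card_univ, Fintype.card_fin]
  · intro ρ hρ ρ' hρ' heq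
    have heq' : univ.image ρ = univ.image ρ' := heq
    simp only [mem_coe, mem_filter] at hρ hρ'
    have hsm : StrictMono ρ := mem_monoSet.1 hρ.1
    have hsm' : StrictMono ρ' := mem_monoSet.1 hρ'.1
    have hcard : (univ.image ρ).card = r := by
      rw [Finset.card_image_of_injective _ hsm.injective, Finset.card_univ, Fintype.card_fin]
    have h1 : ρ = (univ.image ρ).orderEmbOfFin hcard :=
      Finset.orderEmbOfFin_unique hcard (fun x => Finset.mem_image_of_mem _ (mem_univ _)) hsm
    have h2 : ρ' = (univ.image ρ).orderEmbOfFin hcard :=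
      Finset.orderEmbOfFin_unique hcard
        (fun x => by rw [heq']; exact Finset.mem_image_of_mem _ (mem_univ _)) hsm'
    rw [h1, h2]
  · intro S hS
    simp only [mem_coe, mem_filter, Finset.mem_powersetCard] at hS
    obtain ⟨⟨-, hcard⟩, hQ⟩ := hS
    refine ⟨S.orderEmbOfFin hcard, ?_, ?_⟩
    · simp only [mem_coe, mem_filter]
      have himg : univ.image (S.orderEmbOfFin hcard) = S := by
        apply Finset.coe_injective
        rw [Finset.coe_image, Finset.coe_univ, Set.image_univ, Finset.range_orderEmbOfFin]
      rw [himg]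
      exact ⟨mem_monoSet.2 (S.orderEmbOfFin hcard).strictMono, hQ⟩
    · apply Finset.coe_injective
      rw [Finset.coe_image, Finset.coe_univ, Set.image_univ, Finset.range_orderEmbOfFin]

lemma card_monoSet : (monoSet r n).card = n.choose r := by
  classical
  have h0 : monoSet r n = (monoSet r n).filter (fun ρ => (fun _ => True) (univ.image ρ)) := by
    simp
  rw [h0, card_monoSet_filter (fun _ => True)]
  simp [Finset.card_powersetCard]

end Sampling

end FewCopies

namespace FewCopies

section DoubleCount

variable {k n r : ℕ}

lemma sum_comp_eq_sum_fiber {α : Type*} (s : Finset α) (f : α → Fin n) (g : Fin n → ℕ) :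
    ∑ a ∈ s, g (f a) = ∑ i : Fin n, (s.filter fun a => f a = i).card * g i := by
  classical
  have h1 : ∑ a ∈ s, g (f a) = ∑ a ∈ s.filter (fun a => f a ∈ univ), g (f a) := by
    rw [Finset.filter_true_of_mem (fun a _ => mem_univ _)]
  rw [h1, ← Finset.sum_fiberwise_eq_sum_filter s univ f (fun a => g (f a))]
  apply Finset.sum_congr rfl
  intro i _
  apply Finset.sum_const_nat
  intro a ha
  rw [mem_filter] at ha
  rw [ha.2]

/-- sum over monotone maps of evaluations: each value is hit the same number of times -/
lemma sum_mono_eval (hr1 : 1 ≤ r) (h : Fin n → ℕ) :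
    ∑ γ ∈ monoSet r n, ∑ b : Fin r, h (γ b)
      = (n - 1).choose (r - 1) * ∑ i : Fin n, h i := by
  classical
  have step1 : ∀ γ ∈ monoSet r n, ∑ b : Fin r, h (γ b)
      = ∑ i : Fin n, ((univ : Finset (Fin r)).filter fun b => γ b = i).card * h i :=
    fun γ _ => sum_comp_eq_sum_fiber univ γ h
  rw [Finset.sum_congr rfl step1, Finset.sum_comm]
  have hcnt : ∀ i : Fin n, ∑ γ ∈ monoSet r n,
      ((univ : Finset (Fin r)).filter fun b => γ b = i).card = (n - 1).choose (r - 1) := by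
    intro i
    have hfib : ∀ γ ∈ monoSet r n, ((univ : Finset (Fin r)).filter fun b => γ b = i).card
        = if i ∈ univ.image γ then 1 else 0 := by
      intro γ hγ
      have hinj : Function.Injective γ := (mem_monoSet.1 hγ).injective
      by_cases him : i ∈ univ.image γ
      · rw [if_pos him]
        obtain ⟨b, -, hb⟩ := Finset.mem_image.1 him
        rw [Finset.card_eq_one]
        refine ⟨b, ?_⟩
        ext b'
        rw [mem_filter, Finset.mem_singleton]
        constructor
        · rintro ⟨-, hb'⟩
          exact hinj (by rw [hb', hb])
        · rintro rfl
          exact ⟨mem_univ _, hb⟩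
      · rw [if_neg him]
        rw [Finset.card_eq_zero, Finset.filter_eq_empty_iff]
        intro b _ hb
        exact him (Finset.mem_image.2 ⟨b, mem_univ _, hb⟩)
    rw [Finset.sum_congr rfl hfib, Finset.sum_boole]
    have hQ : ((monoSet r n).filter fun γ => i ∈ univ.image γ).card
        = (((univ : Finset (Fin n)).powersetCard r).filter fun S => i ∈ S).card :=
      card_monoSet_filter (fun S => i ∈ S)
    have hQ2 : (((univ : Finset (Fin n)).powersetCard r).filter fun S => i ∈ S).card
        = (n - 1).choose (r - 1) := by
      have he : (((univ : Finset (Fin n)).powersetCard r).filter fun S => i ∈ S)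
          = (((univ : Finset (Fin n)).powersetCard r).filter fun S => {i} ⊆ S) := by
        apply Finset.filter_congr
        intro S _
        simp [Finset.singleton_subset_iff]
      rw [he, card_powersetCard_filter_supset {i} (by simpa using hr1)]
      simp
    simp only [Nat.cast_id]
    rw [hQ, hQ2]
  calc ∑ i : Fin n, ∑ γ ∈ monoSet r n,
        ((univ : Finset (Fin r)).filter fun b => γ b = i).card * h i
      = ∑ i : Fin n, (∑ γ ∈ monoSet r n,
        ((univ : Finset (Fin r)).filter fun b => γ b = i).card) * h i := by
        apply Finset.sum_congr rfl
        intro i _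
        rw [Finset.sum_mul]
  _ = ∑ i : Fin n, (n - 1).choose (r - 1) * h i := by
        apply Finset.sum_congr rfl
        intro i _
        rw [hcnt i]
  _ = (n - 1).choose (r - 1) * ∑ i : Fin n, h i := by rw [Finset.mul_sum]

lemma ones_eq_double_sum {m : ℕ} (M : Fin m → Fin m → Bool) :
    ones M = ∑ i : Fin m, ∑ j : Fin m, (if M i j then 1 else 0) := by
  classical
  rw [ones, Finset.card_filter]
  rw [Fintype.sum_prod_type]

/-- The key double count for ones over all `r × r` samples. -/
lemma sum_ones_sub (hr1 : 1 ≤ r) (M : Fin n → Fin n → Bool) :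
    ∑ ρ ∈ monoSet r n, ∑ γ ∈ monoSet r n, ones (fun a b => M (ρ a) (γ b))
      = (n - 1).choose (r - 1) * ((n - 1).choose (r - 1) * ones M) := by
  classical
  set e : Fin n → Fin n → ℕ := fun i j => if M i j then 1 else 0 with he
  set g : Fin n → ℕ := fun i => ∑ j : Fin n, e i j with hg
  have step1 : ∀ ρ ∈ monoSet r n,
      ∑ γ ∈ monoSet r n, ones (fun a b => M (ρ a) (γ b))
        = (n - 1).choose (r - 1) * ∑ a : Fin r, g (ρ a) := by
    intro ρ _
    have e1 : ∀ γ ∈ monoSet r n, ones (fun a b => M (ρ a) (γ b))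
        = ∑ a : Fin r, ∑ b : Fin r, e (ρ a) (γ b) :=
      fun γ _ => ones_eq_double_sum _
    rw [Finset.sum_congr rfl e1, Finset.sum_comm]
    have e2 : ∀ a ∈ (univ : Finset (Fin r)),
        ∑ γ ∈ monoSet r n, ∑ b : Fin r, e (ρ a) (γ b)
          = (n - 1).choose (r - 1) * ∑ j : Fin n, e (ρ a) j :=
      fun a _ => sum_mono_eval hr1 (fun j => e (ρ a) j)
    rw [Finset.sum_congr rfl e2, ← Finset.mul_sum]
  rw [Finset.sum_congr rfl step1, ← Finset.mul_sum]
  congr 1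
  have e3 := sum_mono_eval (n := n) hr1 g
  rw [e3]
  congr 1
  rw [ones_eq_double_sum]

end DoubleCount

end FewCopies

namespace FewCopies

section CopyCount

variable {k n r : ℕ}

/-- counting monotone maps whose image contains the image of a fixed strictly
monotone `u : Fin k → Fin n`. -/
lemma card_monoSet_supset {u : Fin k → Fin n} (hu : StrictMono u) (hkr : k ≤ r) :
    ((monoSet r n).filter fun ρ => univ.image u ⊆ univ.image ρ).card
      = (n - k).choose (r - k) := by
  classical
  rw [card_monoSet_filter (fun S => univ.image u ⊆ S)]
  have hT : (univ.image u).card = k := by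
    rw [Finset.card_image_of_injective _ hu.injective, Finset.card_univ, Fintype.card_fin]
  rw [card_powersetCard_filter_supset (univ.image u) (by omega), hT]

/-- The key double count for copies over all `r × r` samples. -/
lemma sum_cpy_sub (π : Equiv.Perm (Fin k)) (hkr : k ≤ r) (M : Fin n → Fin n → Bool) :
    ∑ ρ ∈ monoSet r n, ∑ γ ∈ monoSet r n, (cpy π fun a b => M (ρ a) (γ b)).card
      = (cpy π M).card * ((n - k).choose (r - k)) ^ 2 := by
  classical
  have lhs_eq : ∑ ρ ∈ monoSet r n, ∑ γ ∈ monoSet r n, (cpy π fun a b => M (ρ a) (γ b)).card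
      = ((monoSet r n ×ˢ monoSet r n).sigma
          (fun p => cpy π fun a b => M (p.1 a) (p.2 b))).card := by
    rw [Finset.card_sigma, Finset.sum_product]
  have rhs_eq : ((cpy π M).sigma (fun uv =>
        ((monoSet r n).filter fun ρ => univ.image uv.1 ⊆ univ.image ρ) ×ˢ
        ((monoSet r n).filter fun γ => univ.image uv.2 ⊆ univ.image γ))).card
      = (cpy π M).card * ((n - k).choose (r - k)) ^ 2 := by
    rw [Finset.card_sigma]
    apply Finset.sum_const_nat
    intro uv huv
    obtain ⟨hu, hv, -⟩ := mem_cpy.1 huv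
    rw [Finset.card_product, card_monoSet_supset hu hkr, card_monoSet_supset hv hkr, sq]
  rw [lhs_eq, ← rhs_eq]
  apply Finset.card_bij
    (i := fun q _ => (⟨(q.1.1 ∘ q.2.1, q.1.2 ∘ q.2.2), (q.1.1, q.1.2)⟩ :
      (_ : (Fin k → Fin n) × (Fin k → Fin n)) ×
        ((Fin r → Fin n) × (Fin r → Fin n))))
  · -- membership
    rintro ⟨⟨ρ, γ⟩, ⟨x, y⟩⟩ hq
    rw [Finset.mem_sigma, Finset.mem_product] at hq
    obtain ⟨⟨hρ, hγ⟩, hxy⟩ := hq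
    obtain ⟨hx, hy, hcond⟩ := mem_cpy.1 hxy
    have hρm : StrictMono ρ := mem_monoSet.1 hρ
    have hγm : StrictMono γ := mem_monoSet.1 hγ
    rw [Finset.mem_sigma, Finset.mem_product]
    refine ⟨?_, ?_, ?_⟩
    · rw [mem_cpy]
      exact ⟨hρm.comp hx, hγm.comp hy, fun i => hcond i⟩
    · rw [mem_filter]
      refine ⟨hρ, ?_⟩
      intro t ht
      simp only [Finset.mem_image] at ht ⊢
      obtain ⟨i, -, hi⟩ := ht
      exact ⟨x i, mem_univ _, hi⟩
    · rw [mem_filter]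
      refine ⟨hγ, ?_⟩
      intro t ht
      simp only [Finset.mem_image] at ht ⊢
      obtain ⟨j, -, hj⟩ := ht
      exact ⟨y j, mem_univ _, hj⟩
  · -- injectivity
    rintro ⟨⟨ρ, γ⟩, ⟨x, y⟩⟩ hq ⟨⟨ρ', γ'⟩, ⟨x', y'⟩⟩ hq' heq
    rw [Finset.mem_sigma, Finset.mem_product] at hq hq'
    obtain ⟨h1, h2'⟩ := Sigma.ext_iff.1 heq
    have h2 : ((ρ, γ) : (Fin r → Fin n) × (Fin r → Fin n)) = (ρ', γ') := eq_of_heq h2'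
    rw [Prod.mk.injEq] at h1 h2
    obtain ⟨hcomp1, hcomp2⟩ := h1
    obtain ⟨hρe, hγe⟩ := h2
    subst hρe; subst hγe
    have hρm : StrictMono ρ := mem_monoSet.1 hq.1.1
    have hγm : StrictMono γ := mem_monoSet.1 hq.1.2
    have hx : x = x' := by
      funext i
      exact hρm.injective (congrFun hcomp1 i)
    have hy : y = y' := by
      funext j
      exact hγm.injective (congrFun hcomp2 j)
    subst hx; subst hy
    rfl
  · -- surjectivity
    rintro ⟨⟨u, v⟩, ⟨ρ, γ⟩⟩ hq
    rw [Finset.mem_sigma, Finset.mem_product, mem_filter, mem_filter] at hq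
    obtain ⟨huv, ⟨hρ, hρim⟩, ⟨hγ, hγim⟩⟩ := hq
    obtain ⟨hu, hv, hcond⟩ := mem_cpy.1 huv
    have hρm : StrictMono ρ := mem_monoSet.1 hρ
    have hγm : StrictMono γ := mem_monoSet.1 hγ
    have hxex : ∀ i : Fin k, ∃ a : Fin r, ρ a = u i := by
      intro i
      have := hρim (Finset.mem_image_of_mem u (mem_univ i))
      obtain ⟨a, -, ha⟩ := Finset.mem_image.1 this
      exact ⟨a, ha⟩
    have hyex : ∀ j : Fin k, ∃ b : Fin r, γ b = v j := by
      intro j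
      have := hγim (Finset.mem_image_of_mem v (mem_univ j))
      obtain ⟨b, -, hb⟩ := Finset.mem_image.1 this
      exact ⟨b, hb⟩
    set x : Fin k → Fin r := fun i => (hxex i).choose with hxdef
    set y : Fin k → Fin r := fun j => (hyex j).choose with hydef
    have hxs : ∀ i, ρ (x i) = u i := fun i => (hxex i).choose_spec
    have hys : ∀ j, γ (y j) = v j := fun j => (hyex j).choose_spec
    refine ⟨⟨(ρ, γ), (x, y)⟩, ?_, ?_⟩
    · rw [Finset.mem_sigma, Finset.mem_product]
      refine ⟨⟨hρ, hγ⟩, ?_⟩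
      rw [mem_cpy]
      refine ⟨?_, ?_, ?_⟩
      · intro i i' hii
        have : ρ (x i) < ρ (x i') := by rw [hxs, hxs]; exact hu hii
        exact hρm.lt_iff_lt.1 this
      · intro j j' hjj
        have : γ (y j) < γ (y j') := by rw [hys, hys]; exact hv hjj
        exact hγm.lt_iff_lt.1 this
      · intro i
        show M (ρ (x i)) (γ (y (π i))) = true
        rw [hxs, hys]
        exact hcond i
    · congr 1
      exact Prod.ext (funext fun i => hxs i) (funext fun j => hys j)

end CopyCount

end FewCopies

namespace FewCopies

section Supersat

variable {k : ℕ}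

lemma choose_id1 {m s : ℕ} (hs : 1 ≤ s) : m * (m - 1).choose (s - 1) = m.choose s * s := by
  obtain ⟨s', rfl⟩ : ∃ s', s = s' + 1 := ⟨s - 1, by omega⟩
  cases m with
  | zero =>
    simp [Nat.choose_eq_zero_of_lt (by omega : 0 < s' + 1)]
  | succ m' =>
    simpa using Nat.add_one_mul_choose_eq m' s'

lemma choose_id2 {n r : ℕ} (j : ℕ) (hjr : j ≤ r) (hrn : r ≤ n) :
    n.choose r * ∏ i ∈ Finset.range j, (r - i)
      = (n - j).choose (r - j) * ∏ i ∈ Finset.range j, (n - i) := by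
  induction j with
  | zero => simp
  | succ j IH =>
    have hj : j ≤ r := by omega
    rw [Finset.prod_range_succ, Finset.prod_range_succ, ← Nat.mul_assoc, IH hj]
    have hid : (n - j) * ((n - j) - 1).choose ((r - j) - 1) = (n - j).choose (r - j) * (r - j) :=
      choose_id1 (by omega)
    have e1 : (n - j) - 1 = n - (j + 1) := by omega
    have e2 : (r - j) - 1 = r - (j + 1) := by omega
    rw [e1, e2] at hid
    calc (n - j).choose (r - j) * (∏ i ∈ Finset.range j, (n - i)) * (r - j)
        = ((n - j).choose (r - j) * (r - j)) * ∏ i ∈ Finset.range j, (n - i) := by ring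
    _ = ((n - j) * (n - (j + 1)).choose (r - (j + 1))) * ∏ i ∈ Finset.range j, (n - i) := by
        rw [hid]
    _ = (n - (j + 1)).choose (r - (j + 1)) * ((∏ i ∈ Finset.range j, (n - i)) * (n - j)) := by
        ring
    _ = _ := by rw [← Finset.prod_range_succ]

lemma prod_ratio {n r : ℕ} (hrn : r ≤ n) (j : ℕ) :
    (∏ i ∈ Finset.range j, (r - i)) * n ^ j ≤ (∏ i ∈ Finset.range j, (n - i)) * r ^ j := by
  induction j with
  | zero => simp
  | succ j IH =>
    rw [Finset.prod_range_succ, Finset.prod_range_succ, pow_succ, pow_succ]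
    have hpt : (r - j) * n ≤ (n - j) * r := by
      rcases Nat.le_total j r with hjr | hrj
      · rw [Nat.sub_mul, Nat.sub_mul]
        have h1 : j * r ≤ j * n := Nat.mul_le_mul_left _ hrn
        have h2 : j * n ≤ r * n := Nat.mul_le_mul_right _ hjr
        have h3 : n * r = r * n := Nat.mul_comm _ _
        omega
      · have : r - j = 0 := by omega
        simp [this]
    calc (∏ i ∈ Finset.range j, (r - i)) * (r - j) * (n ^ j * n)
        = ((∏ i ∈ Finset.range j, (r - i)) * n ^ j) * ((r - j) * n) := by ring
    _ ≤ ((∏ i ∈ Finset.range j, (n - i)) * r ^ j) * ((n - j) * r) :=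
        Nat.mul_le_mul IH hpt
    _ = (∏ i ∈ Finset.range j, (n - i)) * (n - j) * (r ^ j * r) := by ring

/-- The quantitative supersaturation bound, entirely in ℕ. -/
lemma supersat (hk : 1 < k) (c0 : ℕ) (hc0k : k ≤ c0) (hc01 : 1 ≤ c0)
    (hc : ∀ (σ : Equiv.Perm (Fin k)) (n : ℕ) (M : Fin n → Fin n → Bool),
      cpy σ M = ∅ → ones M ≤ c0 * n)
    (π : Equiv.Perm (Fin k)) (n : ℕ) (M : Fin n → Fin n → Bool) :
    ones M ≤ 4 * c0 * n ∨
      (ones M) ^ (2 * k - 1) ≤ (4 * c0) ^ (2 * k - 1) * ((cpy π M).card * n ^ (2 * k - 2)) := by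
  classical
  set q := ones M with hq
  by_cases hbig : q ≤ 4 * c0 * n
  · exact Or.inl hbig
  push_neg at hbig
  right
  have hqn2 : q ≤ n * n := ones_le_sq M
  have hn1 : 1 ≤ n := by
    rcases Nat.eq_zero_or_pos n with h0 | h
    · subst h0; simp at hqn2; omega
    · exact h
  have hq1 : 1 ≤ q := by
    have : 4 * c0 * n ≥ 0 := Nat.zero_le _
    omega
  have hnc0 : 4 * c0 < n := by
    by_contra hcon
    push_neg at hcon
    have : q ≤ n * n := hqn2
    have h2 : n * n ≤ (4 * c0) * n := Nat.mul_le_mul_right _ hcon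
    omega
  have hkn : k ≤ n := by omega
  set r : ℕ := max k (2 * c0 * n * n / q + 1) with hr
  have hkr : k ≤ r := le_max_left _ _
  have hr1 : 1 ≤ r := by omega
  have hdm := Nat.div_add_mod (2 * c0 * n * n) q
  have hmod : 2 * c0 * n * n % q < q := Nat.mod_lt _ (by omega)
  have hqr_lower : 2 * c0 * n * n < q * r := by
    have h1 : 2 * c0 * n * n / q + 1 ≤ r := le_max_right _ _
    have h2 : q * (2 * c0 * n * n / q + 1) ≤ q * r := Nat.mul_le_mul_left _ h1
    have h3 : q * (2 * c0 * n * n / q) + q = q * (2 * c0 * n * n / q + 1) := by ring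
    omega
  have hrn : r ≤ n := by
    have hdiv : 2 * c0 * n * n / q ≤ n / 2 := by
      have h1 : 2 * c0 * n * n / q ≤ 2 * c0 * n * n / (4 * c0 * n) :=
        Nat.div_le_div_left (by omega) (by positivity)
      have h2 : 2 * c0 * n * n / (4 * c0 * n) = n / 2 := by
        have e1 : 2 * c0 * n * n = (2 * c0 * n) * n := by ring
        have e2 : 4 * c0 * n = (2 * c0 * n) * 2 := by ring
        rw [e1, e2, Nat.mul_div_mul_left _ _ (by positivity)]
      omega
    have : n / 2 + 1 ≤ n := by omega
    have hkn' : k ≤ n := hkn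
    omega
  have hqr_upper : q * r ≤ 4 * c0 * (n * n) := by
    rcases max_cases k (2 * c0 * n * n / q + 1) with ⟨hmax, -⟩ | ⟨hmax, -⟩
    · rw [hr, hmax]
      calc q * k ≤ (n * n) * (4 * c0) := Nat.mul_le_mul hqn2 (by omega)
      _ = 4 * c0 * (n * n) := by ring
    · rw [hr, hmax]
      have h1 : q * (2 * c0 * n * n / q) ≤ 2 * c0 * n * n := Nat.mul_div_le _ _
      have h2 : q * (2 * c0 * n * n / q + 1) = q * (2 * c0 * n * n / q) + q := by ring
      have h3 : q ≤ n * n := hqn2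
      have h4 : 2 * c0 * n * n + n * n ≤ 4 * c0 * (n * n) := by nlinarith
      omega
  -- the sampled inequality
  have hdel : ∀ ρ ∈ monoSet r n, ∀ γ ∈ monoSet r n,
      ones (fun a b => M (ρ a) (γ b)) ≤ c0 * r + (cpy π (fun a b => M (ρ a) (γ b))).card := by
    intro ρ _ γ _
    exact deletion (by omega) c0 hc π (ones (fun a b => M (ρ a) (γ b))) r _ le_rfl
  set B0 : ℕ := n.choose r with hB0
  set B1 : ℕ := (n - 1).choose (r - 1) with hB1
  set Bk : ℕ := (n - k).choose (r - k) with hBk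
  set cp : ℕ := (cpy π M).card with hcp
  set Pk : ℕ := ∏ i ∈ Finset.range k, (r - i) with hPk
  set Qk : ℕ := ∏ i ∈ Finset.range k, (n - i) with hQk
  have hsum : q * B1 ^ 2 ≤ B0 ^ 2 * (c0 * r) + cp * Bk ^ 2 := by
    have h1 : ∑ ρ ∈ monoSet r n, ∑ γ ∈ monoSet r n, ones (fun a b => M (ρ a) (γ b))
        = B1 * (B1 * q) := sum_ones_sub hr1 M
    have h2 : ∑ ρ ∈ monoSet r n, ∑ γ ∈ monoSet r n,
        (cpy π fun a b => M (ρ a) (γ b)).card = cp * Bk ^ 2 := sum_cpy_sub π hkr M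
    have h3 : ∑ ρ ∈ monoSet r n, ∑ γ ∈ monoSet r n, ones (fun a b => M (ρ a) (γ b))
        ≤ ∑ ρ ∈ monoSet r n, ∑ γ ∈ monoSet r n,
          (c0 * r + (cpy π fun a b => M (ρ a) (γ b)).card) := by
      apply Finset.sum_le_sum
      intro ρ hρ
      apply Finset.sum_le_sum
      intro γ hγ
      exact hdel ρ hρ γ hγ
    have e1 : ∀ ρ ∈ monoSet r n,
        ∑ γ ∈ monoSet r n, (c0 * r + (cpy π fun a b => M (ρ a) (γ b)).card)
        = (monoSet r n).card * (c0 * r)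
          + ∑ γ ∈ monoSet r n, (cpy π fun a b => M (ρ a) (γ b)).card := by
      intro ρ _
      rw [Finset.sum_add_distrib, Finset.sum_const, smul_eq_mul]
    have h4 : ∑ ρ ∈ monoSet r n, ∑ γ ∈ monoSet r n,
        (c0 * r + (cpy π fun a b => M (ρ a) (γ b)).card)
        = (monoSet r n).card * ((monoSet r n).card * (c0 * r)) + cp * Bk ^ 2 := by
      rw [Finset.sum_congr rfl e1, Finset.sum_add_distrib, Finset.sum_const, smul_eq_mul, ← h2]
    calc q * B1 ^ 2 = B1 * (B1 * q) := by ring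
    _ ≤ (monoSet r n).card * ((monoSet r n).card * (c0 * r)) + cp * Bk ^ 2 := by
        rw [← h1, ← h4] at *
        exact le_trans h3 (le_of_eq rfl)
    _ = B0 ^ 2 * (c0 * r) + cp * Bk ^ 2 := by
        rw [card_monoSet]; ring
  -- Step A/B/C : cancel n^2 after using n*B1 = B0*r and q*r > 2*c0*n*n
  have hid1 : n * B1 = B0 * r := choose_id1 hr1
  have hstepA : q * B0 ^ 2 * r ^ 2 ≤ (B0 ^ 2 * (c0 * r) + cp * Bk ^ 2) * (n * n) := by
    calc q * B0 ^ 2 * r ^ 2 = q * ((B0 * r) * (B0 * r)) := by ring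
    _ = q * ((n * B1) * (n * B1)) := by rw [hid1]
    _ = (q * B1 ^ 2) * (n * n) := by ring
    _ ≤ (B0 ^ 2 * (c0 * r) + cp * Bk ^ 2) * (n * n) := Nat.mul_le_mul_right _ hsum
  have hstepB : c0 * r * B0 ^ 2 * (n * n) ≤ cp * Bk ^ 2 * (n * n) := by
    have hAA : 2 * (c0 * r * B0 ^ 2 * (n * n)) ≤ q * B0 ^ 2 * r ^ 2 := by
      calc 2 * (c0 * r * B0 ^ 2 * (n * n)) = (2 * c0 * n * n) * (r * B0 ^ 2) := by ring
      _ ≤ (q * r) * (r * B0 ^ 2) := Nat.mul_le_mul_right _ (le_of_lt hqr_lower)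
      _ = q * B0 ^ 2 * r ^ 2 := by ring
    have hBB : q * B0 ^ 2 * r ^ 2
        ≤ c0 * r * B0 ^ 2 * (n * n) + cp * Bk ^ 2 * (n * n) := by
      calc q * B0 ^ 2 * r ^ 2 ≤ (B0 ^ 2 * (c0 * r) + cp * Bk ^ 2) * (n * n) := hstepA
      _ = c0 * r * B0 ^ 2 * (n * n) + cp * Bk ^ 2 * (n * n) := by ring
    have := le_trans hAA hBB
    linarith
  have hstepC : c0 * r * B0 ^ 2 ≤ cp * Bk ^ 2 := by
    have hnn : 0 < n * n := by positivity
    refine Nat.le_of_mul_le_mul_left ?_ hnn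
    calc (n * n) * (c0 * r * B0 ^ 2) = c0 * r * B0 ^ 2 * (n * n) := by ring
    _ ≤ cp * Bk ^ 2 * (n * n) := hstepB
    _ = (n * n) * (cp * Bk ^ 2) := by ring
  -- Step D : replace B0, Bk using the product identity
  have hid2 : B0 * Pk = Bk * Qk := choose_id2 k hkr hrn
  have hB0pos : 0 < B0 := Nat.choose_pos hrn
  have hstepD : c0 * r * Qk ^ 2 ≤ cp * Pk ^ 2 := by
    refine Nat.le_of_mul_le_mul_left ?_ (show 0 < B0 ^ 2 by positivity)
    calc B0 ^ 2 * (c0 * r * Qk ^ 2) = (c0 * r * B0 ^ 2) * Qk ^ 2 := by ring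
    _ ≤ (cp * Bk ^ 2) * Qk ^ 2 := Nat.mul_le_mul_right _ hstepC
    _ = cp * ((Bk * Qk) * (Bk * Qk)) := by ring
    _ = cp * ((B0 * Pk) * (B0 * Pk)) := by rw [hid2]
    _ = B0 ^ 2 * (cp * Pk ^ 2) := by ring
  -- Step E : compare Pk, Qk via prod_ratio and cancel
  have hQkpos : 0 < Qk := by
    rw [hQk]
    apply Finset.prod_pos
    intro i hi
    rw [Finset.mem_range] at hi
    omega
  have hprodr : Pk * n ^ k ≤ Qk * r ^ k := prod_ratio hrn k
  have hstepE : c0 * r * n ^ (2 * k) ≤ cp * r ^ (2 * k) := by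
    refine Nat.le_of_mul_le_mul_left ?_ (show 0 < Qk ^ 2 by positivity)
    have hsq : (Pk * n ^ k) ^ 2 ≤ (Qk * r ^ k) ^ 2 := Nat.pow_le_pow_left hprodr 2
    have en : n ^ (2 * k) = (n ^ k) ^ 2 := by rw [← pow_mul, Nat.mul_comm k 2]
    have er : r ^ (2 * k) = (r ^ k) ^ 2 := by rw [← pow_mul, Nat.mul_comm k 2]
    calc Qk ^ 2 * (c0 * r * n ^ (2 * k))
        = (c0 * r * Qk ^ 2) * (n ^ k) ^ 2 := by rw [en]; ring
    _ ≤ (cp * Pk ^ 2) * (n ^ k) ^ 2 := Nat.mul_le_mul_right _ hstepD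
    _ = cp * (Pk * n ^ k) ^ 2 := by ring
    _ ≤ cp * (Qk * r ^ k) ^ 2 := Nat.mul_le_mul_left _ hsq
    _ = Qk ^ 2 * (cp * (r ^ k) ^ 2) := by ring
    _ = Qk ^ 2 * (cp * r ^ (2 * k)) := by rw [er]
  -- Step F : multiply by q^(2k-1), use q*r ≤ 4*c0*n^2, cancel r and n^(2k)
  have hre : r ^ (2 * k) = r * r ^ (2 * k - 1) := by
    rw [← pow_succ']
    congr 1
    omega
  have hqr_pow : (q * r) ^ (2 * k - 1) ≤ (4 * c0 * (n * n)) ^ (2 * k - 1) :=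
    Nat.pow_le_pow_left hqr_upper _
  have hnn_pow : (4 * c0 * (n * n)) ^ (2 * k - 1)
      = (4 * c0) ^ (2 * k - 1) * (n ^ (2 * k) * n ^ (2 * k - 2)) := by
    rw [mul_pow]
    congr 1
    have h1 : (n * n) ^ (2 * k - 1) = n ^ (2 * (2 * k - 1)) := by
      rw [← sq, ← pow_mul]
    rw [h1, ← pow_add]
    congr 1
    omega
  have hstepF : c0 * (q ^ (2 * k - 1) * n ^ (2 * k))
      ≤ (4 * c0) ^ (2 * k - 1) * (cp * n ^ (2 * k - 2)) * n ^ (2 * k) := by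
    refine Nat.le_of_mul_le_mul_left ?_ (show 0 < r by omega)
    calc r * (c0 * (q ^ (2 * k - 1) * n ^ (2 * k)))
        = (c0 * r * n ^ (2 * k)) * q ^ (2 * k - 1) := by ring
    _ ≤ (cp * r ^ (2 * k)) * q ^ (2 * k - 1) := Nat.mul_le_mul_right _ hstepE
    _ = cp * r * ((q * r) ^ (2 * k - 1)) := by
        rw [mul_pow, hre]; ring
    _ ≤ cp * r * ((4 * c0 * (n * n)) ^ (2 * k - 1)) := Nat.mul_le_mul_left _ hqr_pow
    _ = r * ((4 * c0) ^ (2 * k - 1) * (cp * n ^ (2 * k - 2)) * n ^ (2 * k)) := by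
        rw [hnn_pow]; ring
  have hfinal : c0 * q ^ (2 * k - 1) ≤ (4 * c0) ^ (2 * k - 1) * (cp * n ^ (2 * k - 2)) := by
    refine Nat.le_of_mul_le_mul_right ?_ (show 0 < n ^ (2 * k) by positivity)
    calc c0 * q ^ (2 * k - 1) * n ^ (2 * k) = c0 * (q ^ (2 * k - 1) * n ^ (2 * k)) := by ring
    _ ≤ (4 * c0) ^ (2 * k - 1) * (cp * n ^ (2 * k - 2)) * n ^ (2 * k) := hstepF
  calc q ^ (2 * k - 1) ≤ c0 * q ^ (2 * k - 1) := Nat.le_mul_of_pos_left _ (by omega)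
  _ ≤ (4 * c0) ^ (2 * k - 1) * (cp * n ^ (2 * k - 2)) := hfinal

end Supersat

end FewCopies

namespace FewCopies

section Count

variable {k : ℕ}

/-- matrices with at most `m` copies -/
noncomputable def cntS (n m : ℕ) (π : Equiv.Perm (Fin k)) :
    Finset (Fin n → Fin n → Bool) := by
  classical exact univ.filter fun M => (cpy π M).card ≤ m

lemma mem_cntS {n m : ℕ} {π : Equiv.Perm (Fin k)} {M : Fin n → Fin n → Bool} :
    M ∈ cntS n m π ↔ (cpy π M).card ≤ m := by
  classical
  simp [cntS]

lemma card_fiber_le (a : ℕ) (M₀ : Fin a → Fin a → Bool)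
    (s : Finset (Fin (2 * a) → Fin (2 * a) → Bool)) :
    (s.filter fun M => ctr M = M₀).card
      ≤ 15 ^ ((univ.filter fun p : Fin a × Fin a => M₀ p.1 p.2 = true).card) := by
  classical
  have h2 : (0 : ℕ) < 2 := by norm_num
  set supp := univ.filter fun p : Fin a × Fin a => M₀ p.1 p.2 = true with hsupp
  set nzB : Finset (Fin 2 → Fin 2 → Bool) :=
    univ.filter (fun g => g ≠ fun _ _ => false) with hnzB
  have hnzB15 : nzB.card = 15 := by
    rw [hnzB]
    rw [Finset.filter_ne' univ (fun _ _ => false)]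
    rw [Finset.card_erase_of_mem (mem_univ _), Finset.card_univ]
    rfl
  have hT : (supp.pi fun _ => nzB).card = 15 ^ supp.card := by
    rw [Finset.card_pi, Finset.prod_const, hnzB15]
  rw [← hT]
  apply Finset.card_le_card_of_injOn
    (fun M => fun p _ => (fun u v => M (blk p.1 u) (blk p.2 v)))
  · intro M hM
    rw [mem_coe, mem_filter] at hM
    obtain ⟨-, hctr⟩ := hM
    rw [mem_coe, Finset.mem_pi]
    intro p hp
    rw [hsupp, mem_filter] at hp
    have htrue : ctr M p.1 p.2 = true := by rw [hctr]; exact hp.2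
    rw [ctr_eq_true_iff] at htrue
    obtain ⟨u, v, huv⟩ := htrue
    rw [hnzB, mem_filter]
    refine ⟨mem_univ _, ?_⟩
    intro hfun
    have := congrFun (congrFun hfun u) v
    beta_reduce at this; rw [huv] at this
    exact absurd this (by simp)
  · intro M hM M' hM' heq
    rw [mem_coe, mem_filter] at hM hM'
    funext x y
    have hx := blk_decomp h2 x
    have hy := blk_decomp h2 y
    by_cases hp : (pdiv h2 x, pdiv h2 y) ∈ supp
    · have h5 := congrFun (congrFun heq (pdiv h2 x, pdiv h2 y)) hp
      have h6 := congrFun (congrFun h5 (pmod h2 x)) (pmod h2 y)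
      simp only [] at h6
      rw [hx, hy] at h6
      exact h6
    · rw [hsupp, mem_filter] at hp
      push_neg at hp
      have hfalse : M₀ (pdiv h2 x) (pdiv h2 y) = false :=
        Bool.eq_false_iff.2 (fun ht => (hp (mem_univ _)) ht)
      have hcfalse : ctr M (pdiv h2 x) (pdiv h2 y) = false := by rw [hM.2]; exact hfalse
      have hcfalse' : ctr M' (pdiv h2 x) (pdiv h2 y) = false := by rw [hM'.2]; exact hfalse
      have e1 : M x y = false := by
        by_contra hxx
        have hxx' : M x y = true := by
          revert hxx; cases h : M x y <;> simp
        have : ctr M (pdiv h2 x) (pdiv h2 y) = true :=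
          ctr_eq_true_iff.2 ⟨pmod h2 x, pmod h2 y, by rw [hx, hy]; exact hxx'⟩
        rw [hcfalse] at this
        exact absurd this (by simp)
      have e2 : M' x y = false := by
        by_contra hxx
        have hxx' : M' x y = true := by
          revert hxx; cases h : M' x y <;> simp
        have : ctr M' (pdiv h2 x) (pdiv h2 y) = true :=
          ctr_eq_true_iff.2 ⟨pmod h2 x, pmod h2 y, by rw [hx, hy]; exact hxx'⟩
        rw [hcfalse'] at this
        exact absurd this (by simp)
      rw [e1, e2]

lemma count_step (a m : ℕ) (π : Equiv.Perm (Fin k)) :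
    (cntS (2 * a) m π).card ≤ ∑ M₀ ∈ cntS a m π, 15 ^ (ones M₀) := by
  classical
  have h2 : (0 : ℕ) < 2 := by norm_num
  have hmaps : ∀ M ∈ cntS (2 * a) m π, ctr M ∈ cntS a m π := by
    intro M hM
    rw [mem_cntS] at hM ⊢
    exact le_trans (card_cpy_ctr_le π M h2) hM
  rw [Finset.card_eq_sum_card_fiberwise hmaps]
  apply Finset.sum_le_sum
  intro M₀ _
  exact card_fiber_le a M₀ _

lemma count_pad (hk : 0 < k) (n m : ℕ) (π : Equiv.Perm (Fin k)) :
    (cntS n m π).card ≤ (cntS (n + 1) m π).card := by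
  classical
  rcases Nat.eq_zero_or_pos n with rfl | hn
  · -- n = 0 : at most one matrix on the left, and the right is nonempty
    have h1 : (cntS 0 m π).card ≤ 1 := by
      calc (cntS 0 m π).card ≤ (univ : Finset (Fin 0 → Fin 0 → Bool)).card :=
          Finset.card_le_card (Finset.filter_subset _ _)
      _ = 1 := by
          rw [Finset.card_univ]
          simp [Fintype.card_fun]
    have h2 : 0 < (cntS (0 + 1) m π).card := by
      rw [Finset.card_pos]
      refine ⟨fun _ _ => false, ?_⟩
      rw [mem_cntS]
      have : cpy π (fun (_ _ : Fin (0 + 1)) => false) = ∅ := by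
        rw [Finset.eq_empty_iff_forall_notMem]
        intro xy hxy
        obtain ⟨-, -, hcond⟩ := mem_cpy.1 hxy
        have := hcond ⟨0, hk⟩
        exact absurd this (by simp)
      rw [this]
      simp
    omega
  · apply Finset.card_le_card_of_injOn (fun M => padM M)
    · intro M hM
      rw [mem_coe, mem_cntS] at hM ⊢
      exact le_trans (card_cpy_padM_le hn π M) hM
    · intro M hM M' hM' heq
      funext x y
      have h5 := congrFun (congrFun heq (Fin.castLE (by omega) x)) (Fin.castLE (by omega) y)
      have hx : ((Fin.castLE (by omega : n ≤ n + 1) x : Fin (n+1)) : ℕ) < n := by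
        simp [Fin.castLE]
      have hy : ((Fin.castLE (by omega : n ≤ n + 1) y : Fin (n+1)) : ℕ) < n := by
        simp [Fin.castLE]
      simp only [padM] at h5
      rw [dif_pos ⟨hx, hy⟩, dif_pos ⟨hx, hy⟩] at h5
      simpa using h5

lemma count_mono (hk : 0 < k) (m : ℕ) (π : Equiv.Perm (Fin k)) {n N : ℕ} (h : n ≤ N) :
    (cntS n m π).card ≤ (cntS N m π).card := by
  induction N with
  | zero => (cases Nat.eq_zero_of_le_zero h; exact le_rfl)
  | succ N IH =>
    rcases Nat.lt_or_ge n (N + 1) with hlt | hge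
    · exact le_trans (IH (by omega)) (count_pad hk N m π)
    · have : n = N + 1 := by omega
      subst this
      exact le_rfl

end Count

end FewCopies

namespace FewCopies

lemma cube_bound : ((3:ℝ)/4) ^ ((2:ℝ)/3) ≤ 5/6 := by
  set t : ℝ := ((3:ℝ)/4) ^ ((2:ℝ)/3) with ht
  have htpos : 0 ≤ t := Real.rpow_nonneg (by norm_num) _
  have ht3 : t ^ (3:ℕ) = ((3:ℝ)/4) ^ (2:ℕ) := by
    rw [ht, ← Real.rpow_natCast (((3:ℝ)/4) ^ ((2:ℝ)/3)) 3, ← Real.rpow_mul (by norm_num)]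
    norm_num
  by_contra hcon
  push_neg at hcon
  have h1 : ((5:ℝ)/6) ^ (3:ℕ) < t ^ (3:ℕ) :=
    pow_lt_pow_left₀ hcon (by norm_num) (by norm_num)
  rw [ht3] at h1
  norm_num at h1

end FewCopies

set_option maxHeartbeats 2000000 in
/-- The number of `n × n` 0-1 matrices with at most `m` copies of `A_π` is at
most `exp(C · (n + (m · n^(2k-2))^(1/(2k-1))))`. -/
theorem count_matrices_few_copies (k : ℕ) (hk : 1 < k) (π : Equiv.Perm (Fin k)) :
    ∃ C : ℝ, ∀ m n : ℕ,
      (Nat.card {M : Fin n → Fin n → Bool // matCopies π M ≤ m} : ℝ) ≤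
        Real.exp (C * ((n : ℝ) +
          ((m : ℝ) * (n : ℝ) ^ (2 * k - 2)) ^ ((1 : ℝ) / (2 * (k : ℝ) - 1)))) := by
  classical
  open FewCopies Finset in
  obtain ⟨c0, hc0k, hc01, hc⟩ := mt_linear hk
  have hkR : (2:ℝ) ≤ (k:ℝ) := by exact_mod_cast hk
  set c1 : ℝ := 4 * (c0 : ℝ) with hc1def
  have hc01R : (1:ℝ) ≤ (c0:ℝ) := by exact_mod_cast hc01
  have hc1pos : 0 < c1 := by rw [hc1def]; linarith
  set L : ℝ := c1 * Real.log 15 + 1 with hLdef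
  have hlog15 : 0 < Real.log 15 := Real.log_pos (by norm_num)
  have hLpos : 0 < L := by
    rw [hLdef]; positivity
  set C : ℝ := 5 * L + Real.log 2 + 1 with hCdef
  have hlog2 : 0 < Real.log 2 := Real.log_pos (by norm_num)
  have hCpos : 0 < C := by rw [hCdef]; positivity
  have hC5L : 5 * L ≤ C := by rw [hCdef]; linarith
  have hClog2 : Real.log 2 ≤ C := by rw [hCdef]; linarith
  refine ⟨C, ?_⟩
  intro m n
  -- the sizes function
  set s : ℕ → ℝ := fun j => ((m : ℝ) * (j : ℝ) ^ (2 * k - 2)) ^ ((1 : ℝ) / (2 * (k : ℝ) - 1))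
    with hsdef
  have hsnn : ∀ j : ℕ, 0 ≤ s j := by
    intro j
    rw [hsdef]
    apply Real.rpow_nonneg
    positivity
  -- identify the card
  have hcardid : ∀ N : ℕ, (Nat.card {M : Fin N → Fin N → Bool // matCopies π M ≤ m})
      = (cntS N m π).card := by
    intro N
    rw [Nat.card_eq_fintype_card, Fintype.card_subtype]
    apply Finset.card_bij (fun M _ => M)
    · intro M hM
      rw [mem_filter] at hM
      rw [mem_cntS, ← matCopies_eq]
      exact hM.2
    · intro M M' _ _ h; exact h
    · intro M hM
      refine ⟨M, ?_, rfl⟩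
      rw [mem_filter]
      rw [mem_cntS, ← matCopies_eq] at hM
      exact ⟨mem_univ _, hM⟩
  -- exponent facts
  have hepos : (0:ℝ) < 2 * (k:ℝ) - 1 := by linarith
  have hek : (2 * (k:ℝ) - 1) = ((2 * k - 1 : ℕ) : ℝ) := by
    have : (1:ℕ) ≤ 2 * k := by omega
    push_cast [Nat.cast_sub this]
    ring
  set ee : ℝ := (1:ℝ) / (2 * (k:ℝ) - 1) with heedef
  have heepos : 0 < ee := by rw [heedef]; positivity
  -- real ones bound from supersaturation
  have honesR : ∀ (a : ℕ) (M₀ : Fin a → Fin a → Bool), (cpy π M₀).card ≤ m →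
      (ones M₀ : ℝ) ≤ c1 * ((a:ℝ) + s a) := by
    intro a M₀ hm
    rcases supersat hk c0 hc0k hc01 hc π a M₀ with hcase | hcase
    · have h1 : (ones M₀ : ℝ) ≤ ((4 * c0 * a : ℕ) : ℝ) := by exact_mod_cast hcase
      calc (ones M₀ : ℝ) ≤ ((4 * c0 * a : ℕ) : ℝ) := h1
      _ = c1 * (a:ℝ) := by push_cast [hc1def]; ring
      _ ≤ c1 * ((a:ℝ) + s a) := by
          have := hsnn a
          nlinarith
    · have h1 : (ones M₀) ^ (2*k-1) ≤ (4*c0) ^ (2*k-1) * (m * a ^ (2*k-2)) := by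
        refine le_trans hcase ?_
        apply Nat.mul_le_mul_left
        exact Nat.mul_le_mul_right _ hm
      have hcast : ((ones M₀ : ℝ)) ^ (2*k-1 : ℕ)
          ≤ ((4*c0 : ℕ) : ℝ) ^ (2*k-1 : ℕ) * ((m:ℝ) * (a:ℝ) ^ (2*k-2 : ℕ)) := by
        exact_mod_cast h1
      have hxid : (ones M₀ : ℝ) = (((ones M₀ : ℝ)) ^ (2*k-1 : ℕ)) ^ ee := by
        rw [← Real.rpow_natCast ((ones M₀ : ℝ)) (2*k-1), ← Real.rpow_mul (by positivity)]
        rw [← hek, heedef]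
        rw [mul_one_div, div_self (by linarith)]
        exact (Real.rpow_one _).symm
      rw [hxid]
      have hrle : (((ones M₀ : ℝ)) ^ (2*k-1 : ℕ)) ^ ee
          ≤ (((4*c0 : ℕ) : ℝ) ^ (2*k-1 : ℕ) * ((m:ℝ) * (a:ℝ) ^ (2*k-2 : ℕ))) ^ ee :=
        Real.rpow_le_rpow (by positivity) hcast (le_of_lt heepos)
      have hsplit : (((4*c0 : ℕ) : ℝ) ^ (2*k-1 : ℕ) * ((m:ℝ) * (a:ℝ) ^ (2*k-2 : ℕ))) ^ ee
          = ((4*c0 : ℕ) : ℝ) * s a := by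
        rw [Real.mul_rpow (by positivity) (by positivity)]
        congr 1
        rw [← Real.rpow_natCast (((4*c0 : ℕ) : ℝ)) (2*k-1), ← Real.rpow_mul (by positivity),
          ← hek, heedef, mul_one_div, div_self (by linarith), Real.rpow_one]
      calc (((ones M₀ : ℝ)) ^ (2*k-1 : ℕ)) ^ ee
          ≤ (((4*c0 : ℕ) : ℝ) ^ (2*k-1 : ℕ) * ((m:ℝ) * (a:ℝ) ^ (2*k-2 : ℕ))) ^ ee := hrle
      _ = ((4*c0 : ℕ) : ℝ) * s a := hsplit
      _ = c1 * s a := by push_cast [hc1def]; ring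
      _ ≤ c1 * ((a:ℝ) + s a) := by
          have ha : (0:ℝ) ≤ (a:ℝ) := Nat.cast_nonneg _
          nlinarith
  -- the recursion step, in ℝ
  have hstep : ∀ a : ℕ, ((cntS (2*a) m π).card : ℝ)
      ≤ ((cntS a m π).card : ℝ) * Real.exp (L * ((a:ℝ) + s a)) := by
    intro a
    have h1 := count_step (k := k) a m π
    have h2 : ((cntS (2*a) m π).card : ℝ) ≤ ∑ M₀ ∈ cntS a m π, (15:ℝ) ^ (ones M₀) := by
      exact_mod_cast h1
    refine le_trans h2 ?_
    have h3 : ∀ M₀ ∈ cntS a m π, (15:ℝ) ^ (ones M₀) ≤ Real.exp (L * ((a:ℝ) + s a)) := by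
      intro M₀ hM₀
      have hones := honesR a M₀ (mem_cntS.1 hM₀)
      have hann2 : 0 ≤ (a:ℝ) + s a := by
        have := hsnn a
        positivity
      calc (15:ℝ) ^ (ones M₀) = Real.exp (Real.log 15) ^ (ones M₀) := by
            rw [Real.exp_log (by norm_num : (0:ℝ) < 15)]
      _ = Real.exp ((ones M₀ : ℝ) * Real.log 15) := by
            rw [← Real.exp_nat_mul]
      _ ≤ Real.exp (L * ((a:ℝ) + s a)) := by
            apply Real.exp_le_exp.2
            calc (ones M₀ : ℝ) * Real.log 15 ≤ (c1 * ((a:ℝ) + s a)) * Real.log 15 := by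
                  apply mul_le_mul_of_nonneg_right hones (le_of_lt hlog15)
            _ = (c1 * Real.log 15) * ((a:ℝ) + s a) := by ring
            _ ≤ L * ((a:ℝ) + s a) := by
                  apply mul_le_mul_of_nonneg_right _ hann2
                  rw [hLdef]; linarith
    calc ∑ M₀ ∈ cntS a m π, (15:ℝ) ^ (ones M₀)
        ≤ ∑ _M₀ ∈ cntS a m π, Real.exp (L * ((a:ℝ) + s a)) := Finset.sum_le_sum h3
    _ = ((cntS a m π).card : ℝ) * Real.exp (L * ((a:ℝ) + s a)) := by
        rw [Finset.sum_const, nsmul_eq_mul]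
  -- contraction of s
  have hscontr : ∀ a n' : ℕ, 4 * a ≤ 3 * n' → s a ≤ 5/6 * s n' := by
    intro a n' h4a
    have haf : (a:ℝ) ≤ 3/4 * (n':ℝ) := by
      have : ((4*a : ℕ):ℝ) ≤ ((3*n' : ℕ):ℝ) := by exact_mod_cast h4a
      push_cast at this
      linarith
    have hpow : ((a:ℝ)) ^ (2*k-2 : ℕ) ≤ (3/4 * (n':ℝ)) ^ (2*k-2 : ℕ) :=
      pow_le_pow_left₀ (Nat.cast_nonneg _) haf _
    have hmul : (m:ℝ) * (a:ℝ) ^ (2*k-2 : ℕ)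
        ≤ ((3:ℝ)/4) ^ (2*k-2 : ℕ) * ((m:ℝ) * (n':ℝ) ^ (2*k-2 : ℕ)) := by
      rw [mul_pow] at hpow
      have hm0 : (0:ℝ) ≤ (m:ℝ) := Nat.cast_nonneg _
      nlinarith [pow_nonneg (Nat.cast_nonneg (α := ℝ) a) (2*k-2)]
    have hr1 : s a ≤ (((3:ℝ)/4) ^ (2*k-2 : ℕ) * ((m:ℝ) * (n':ℝ) ^ (2*k-2 : ℕ))) ^ ee := by
      rw [hsdef]
      exact Real.rpow_le_rpow (by positivity) hmul (le_of_lt heepos)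
    have hr2 : (((3:ℝ)/4) ^ (2*k-2 : ℕ) * ((m:ℝ) * (n':ℝ) ^ (2*k-2 : ℕ))) ^ ee
        = (((3:ℝ)/4) ^ (2*k-2 : ℕ)) ^ ee * s n' := by
      rw [Real.mul_rpow (by positivity) (by positivity)]
    have hbeta : (((3:ℝ)/4) ^ (2*k-2 : ℕ)) ^ ee ≤ 5/6 := by
      have hb1 : (((3:ℝ)/4) ^ (2*k-2 : ℕ)) ^ ee = ((3:ℝ)/4) ^ (((2*k-2 : ℕ):ℝ) * ee) := by
        rw [← Real.rpow_natCast ((3:ℝ)/4) (2*k-2), ← Real.rpow_mul (by norm_num)]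
      have hE1 : (2:ℝ)/3 ≤ ((2*k-2 : ℕ):ℝ) * ee := by
        have hcast2 : ((2*k-2 : ℕ):ℝ) = 2*(k:ℝ) - 2 := by
          have : (2:ℕ) ≤ 2 * k := by omega
          push_cast [Nat.cast_sub this]
          ring
        rw [hcast2, heedef, mul_one_div, div_le_div_iff₀ (by norm_num) hepos]
        linarith
      calc (((3:ℝ)/4) ^ (2*k-2 : ℕ)) ^ ee = ((3:ℝ)/4) ^ (((2*k-2 : ℕ):ℝ) * ee) := hb1
      _ ≤ ((3:ℝ)/4) ^ ((2:ℝ)/3) :=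
          Real.rpow_le_rpow_of_exponent_ge (by norm_num) (by norm_num) hE1
      _ ≤ 5/6 := cube_bound
    calc s a ≤ (((3:ℝ)/4) ^ (2*k-2 : ℕ)) ^ ee * s n' := by rw [← hr2]; exact hr1
    _ ≤ 5/6 * s n' := by
        apply mul_le_mul_of_nonneg_right hbeta (hsnn n')
  -- the main induction
  have hmain : ∀ N : ℕ, ((cntS N m π).card : ℝ) ≤ Real.exp (C * ((N:ℝ) + s N)) := by
    intro N
    induction N using Nat.strong_induction_on with
    | _ N IH =>
      have hexp_nonneg : 0 ≤ C * ((N:ℝ) + s N) := by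
        have := hsnn N
        positivity
      rcases Nat.lt_or_ge N 2 with hN2 | hN2
      · interval_cases N
        · have h1 : ((cntS 0 m π).card : ℝ) ≤ 1 := by
            have : (cntS 0 m π).card ≤ (univ : Finset (Fin 0 → Fin 0 → Bool)).card :=
              Finset.card_le_card (Finset.filter_subset _ _)
            rw [Finset.card_univ] at this
            have h2 : Fintype.card (Fin 0 → Fin 0 → Bool) = 1 := by simp
            rw [h2] at this
            exact_mod_cast this
          exact le_trans h1 (Real.one_le_exp hexp_nonneg)
        · have h1 : ((cntS 1 m π).card : ℝ) ≤ 2 := by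
            have : (cntS 1 m π).card ≤ (univ : Finset (Fin 1 → Fin 1 → Bool)).card :=
              Finset.card_le_card (Finset.filter_subset _ _)
            rw [Finset.card_univ] at this
            have h2 : Fintype.card (Fin 1 → Fin 1 → Bool) = 2 := by simp
            rw [h2] at this
            exact_mod_cast this
          refine le_trans h1 ?_
          rw [show (2:ℝ) = Real.exp (Real.log 2) from (Real.exp_log (by norm_num)).symm]
          apply Real.exp_le_exp.2
          calc Real.log 2 ≤ C := hClog2
          _ = C * 1 := (mul_one _).symm
          _ ≤ C * ((1:ℕ) + s 1) := by
              apply mul_le_mul_of_nonneg_left _ (le_of_lt hCpos)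
              have := hsnn 1
              push_cast
              linarith
      · set a : ℕ := (N + 1) / 2 with hadef
        have h2a : N ≤ 2 * a := by omega
        have haN : a < N := by omega
        have h4a : 4 * a ≤ 3 * N := by omega
        have hchain1 : (cntS N m π).card ≤ (cntS (2*a) m π).card :=
          count_mono (by omega) m π h2a
        have hIH := IH a haN
        have hsa := hscontr a N h4a
        have hannn : 0 ≤ (a:ℝ) + s a := by
          have := hsnn a
          positivity
        have hkey : (C + L) * ((a:ℝ) + s a) ≤ C * ((N:ℝ) + s N) := by
          have haf : (a:ℝ) ≤ 3/4 * (N:ℝ) := by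
            have : ((4*a : ℕ):ℝ) ≤ ((3*N : ℕ):ℝ) := by exact_mod_cast h4a
            push_cast at this
            linarith
          have hNnn : (0:ℝ) ≤ (N:ℝ) := Nat.cast_nonneg _
          have hsN := hsnn N
          have h56 : (a:ℝ) + s a ≤ 5/6 * ((N:ℝ) + s N) := by
            have : (a:ℝ) ≤ 5/6 * (N:ℝ) := by linarith
            linarith
          calc (C + L) * ((a:ℝ) + s a) ≤ (C + L) * (5/6 * ((N:ℝ) + s N)) := by
                apply mul_le_mul_of_nonneg_left h56 (by linarith)
          _ = (5/6 * (C + L)) * ((N:ℝ) + s N) := by ring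
          _ ≤ C * ((N:ℝ) + s N) := by
              apply mul_le_mul_of_nonneg_right _ (by linarith)
              linarith
        calc ((cntS N m π).card : ℝ) ≤ ((cntS (2*a) m π).card : ℝ) := by exact_mod_cast hchain1
        _ ≤ ((cntS a m π).card : ℝ) * Real.exp (L * ((a:ℝ) + s a)) := hstep a
        _ ≤ Real.exp (C * ((a:ℝ) + s a)) * Real.exp (L * ((a:ℝ) + s a)) := by
            apply mul_le_mul_of_nonneg_right hIH (le_of_lt (Real.exp_pos _))
        _ = Real.exp ((C + L) * ((a:ℝ) + s a)) := by
            rw [← Real.exp_add]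
            congr 1
            ring
        _ ≤ Real.exp (C * ((N:ℝ) + s N)) := Real.exp_le_exp.2 hkey
  rw [hcardid n]
  exact hmain n
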